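/- arXiv:1401.0399 — 6 statements merged into one kernel-verified Lean document; each statement's English description precedes it below -/
import Mathlib

section
/- Let L : ℝ² → M₃(ℝ) be a polynomial map, written in block form L(k) = [[σ(k), r(k)ᵀ], [c(k), Q(k)]] with σ(k) ∈ ℝ, r(k), c(k) ∈ ℝ² and Q(k) ∈ M₂(ℝ). Then L(Rk) = diag(1,R) · L(k) · diag(1,R)ᵀ for all R ∈ SO(2) and all k ∈ ℝ² if and only if there exist one-variable real polynomials a, b, c₁, d, e, m, z, n, h such that for all k ∈ ℝ²: σ(k) = a(s(k)), r(k) = b(s(k)) k + c₁(s(k)) k^⊥, c(k) = d(s(k)) k + e(s(k)) k^⊥, and Q(k) = m(s(k)) I₂ + z(s(k)) k kᵀ + n(s(k)) J₀ + h(s(k)) k (k^⊥)ᵀ. (This is the Fourier-symbol form of the statement that a general linear acoustic-type partial differential system in two space dimensions, for a scalar density field ρ and a momentum vector field J, is invariant by rotation exactly when it has the form ∂_tρ + Σ_k(α_k Δ^k ρ + β_k Δ^k div J + γ_k Δ^k div J^⊥) = 0, ∂_t J + Σ_k(δ_k ∇Δ^k ρ + μ_k Δ^k J + ζ_k ∇div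 Δ^k J + ε_k ∇^⊥Δ^k ρ + ν_k Δ^k J^⊥ + η_k ∇div Δ^k J^⊥) = 0 with finitely many nonzero real coefficients.) -/
open Matrix

/-- The squared norm `s(k) = k_x² + k_y²`. -/
def sq2 (k : Fin 2 → ℝ) : ℝ := k 0 ^ 2 + k 1 ^ 2

/-- The perpendicular vector `k^⊥ = (k_y, −k_x)`. -/
def perp2 (k : Fin 2 → ℝ) : Fin 2 → ℝ := ![k 1, -k 0]

/-- The matrix `J₀` with rows `(0, 1)` and `(−1, 0)`, so that `J₀ k = k^⊥`. -/
def J0mat : Matrix (Fin 2) (Fin 2) ℝ := !![0, 1; -1, 0]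

/-- The block-diagonal matrix `diag(1, R)` of size 3×3. -/
def diag1R2 (R : Matrix (Fin 2) (Fin 2) ℝ) : Matrix (Fin 3) (Fin 3) ℝ :=
  !![1, 0, 0; 0, R 0 0, R 0 1; 0, R 1 0, R 1 1]

lemma eq_on_nonzero (p q : Polynomial ℝ) (h : ∀ t : ℝ, t ≠ 0 → p.eval t = q.eval t) : p = q := by
  apply Polynomial.eq_of_infinite_eval_eq
  apply Set.Infinite.mono (s := {(0:ℝ)}ᶜ)
  · intro x hx; exact h x hx
  · exact (Set.finite_singleton 0).infinite_compl

lemma exists_div_rep (f : Polynomial ℝ) (h : f.eval 0 = 0) :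
    ∃ g : Polynomial ℝ, ∀ u : ℝ, f.eval u = u * g.eval u := by
  have : Polynomial.X ∣ f := by
    rw [Polynomial.X_dvd_iff, Polynomial.coeff_zero_eq_eval_zero, h]
  obtain ⟨g, hg⟩ := this
  exact ⟨g, fun u => by rw [hg]; simp⟩

lemma exists_even_rep_aux : ∀ (n : ℕ) (f : Polynomial ℝ), f.natDegree ≤ n →
    (∀ t : ℝ, f.eval (-t) = f.eval t) →
    ∃ g : Polynomial ℝ, ∀ t : ℝ, f.eval t = g.eval (t ^ 2) := by
  intro n
  induction n using Nat.strong_induction_on with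
  | _ n ih =>
    intro f hdeg hev
    obtain ⟨f₂, hf₂⟩ : Polynomial.X ∣ (f - Polynomial.C (f.eval 0)) := by
      rw [Polynomial.X_dvd_iff, Polynomial.coeff_sub, Polynomial.coeff_zero_eq_eval_zero]
      simp
    have hptw : ∀ t : ℝ, f.eval t = f.eval 0 + t * f₂.eval t := by
      intro t
      have := congrArg (Polynomial.eval t) hf₂
      simp at this
      linarith
    have hodd : ∀ t : ℝ, f₂.eval (-t) = - f₂.eval t := by
      have key : f₂.comp (-Polynomial.X) = -f₂ := by
        apply eq_on_nonzero
        intro t ht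
        have h1 := hptw t
        have h2 := hptw (-t)
        rw [hev] at h2
        have h3 : t * f₂.eval (-t) = t * (- f₂.eval t) := by linarith
        have := mul_left_cancel₀ ht h3
        simpa [Polynomial.eval_comp] using this
      intro t
      have := congrArg (Polynomial.eval t) key
      simpa [Polynomial.eval_comp] using this
    obtain ⟨f₃, hf₃⟩ : Polynomial.X ∣ f₂ := by
      rw [Polynomial.X_dvd_iff, Polynomial.coeff_zero_eq_eval_zero]
      have := hodd 0
      simp at this
      linarith
    have hptw3 : ∀ t : ℝ, f₂.eval t = t * f₃.eval t := by
      intro t; rw [hf₃]; simp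
    have hev3 : ∀ t : ℝ, f₃.eval (-t) = f₃.eval t := by
      have key : f₃.comp (-Polynomial.X) = f₃ := by
        apply eq_on_nonzero
        intro t ht
        have h1 := hptw3 t
        have h2 := hptw3 (-t)
        rw [hodd] at h2
        have h3 : t * f₃.eval (-t) = t * f₃.eval t := by linarith
        have := mul_left_cancel₀ ht h3
        simpa [Polynomial.eval_comp] using this
      intro t
      have := congrArg (Polynomial.eval t) key
      simpa [Polynomial.eval_comp] using this
    by_cases h3z : f₃ = 0
    · refine ⟨Polynomial.C (f.eval 0), fun t => ?_⟩
      rw [hptw t, hptw3 t, h3z]; simp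
    · by_cases h2z : f₂ = 0
      · refine ⟨Polynomial.C (f.eval 0), fun t => ?_⟩
        rw [hptw t, h2z]; simp
      · have hd1 : (f - Polynomial.C (f.eval 0)).natDegree ≤ n := by
          calc (f - Polynomial.C (f.eval 0)).natDegree = f.natDegree := Polynomial.natDegree_sub_C
          _ ≤ n := hdeg
        have hd2 : f₂.natDegree + 1 ≤ n := by
          have : (Polynomial.X * f₂).natDegree = 1 + f₂.natDegree := by
            rw [Polynomial.natDegree_mul Polynomial.X_ne_zero h2z, Polynomial.natDegree_X]
          rw [hf₂] at hd1
          omega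
        have hd3 : f₃.natDegree + 2 ≤ n := by
          have : (Polynomial.X * f₃).natDegree = 1 + f₃.natDegree := by
            rw [Polynomial.natDegree_mul Polynomial.X_ne_zero h3z, Polynomial.natDegree_X]
          rw [hf₃] at hd2
          omega
        obtain ⟨g₃, hg₃⟩ := ih f₃.natDegree (by omega) f₃ le_rfl hev3
        refine ⟨Polynomial.C (f.eval 0) + Polynomial.X * g₃, fun t => ?_⟩
        rw [hptw t, hptw3 t, hg₃ t]
        simp
        ring

lemma exists_even_rep (f : Polynomial ℝ) (h : ∀ t : ℝ, f.eval (-t) = f.eval t) :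
    ∃ g : Polynomial ℝ, ∀ t : ℝ, f.eval t = g.eval (t ^ 2) :=
  exists_even_rep_aux f.natDegree f le_rfl h

lemma exists_odd_rep (f : Polynomial ℝ) (h : ∀ t : ℝ, f.eval (-t) = - f.eval t) :
    ∃ g : Polynomial ℝ, ∀ t : ℝ, f.eval t = t * g.eval (t ^ 2) := by
  obtain ⟨f₂, hf₂⟩ : Polynomial.X ∣ f := by
    rw [Polynomial.X_dvd_iff, Polynomial.coeff_zero_eq_eval_zero]
    have := h 0; simp at this; linarith
  have hptw : ∀ t : ℝ, f.eval t = t * f₂.eval t := by intro t; rw [hf₂]; simp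
  have hev : ∀ t : ℝ, f₂.eval (-t) = f₂.eval t := by
    have key : f₂.comp (-Polynomial.X) = f₂ := by
      apply eq_on_nonzero
      intro t ht
      have h1 := hptw t
      have h2 := hptw (-t)
      rw [h] at h2
      have h3 : t * f₂.eval (-t) = t * f₂.eval t := by linarith
      have := mul_left_cancel₀ ht h3
      simpa [Polynomial.eval_comp] using this
    intro t
    have := congrArg (Polynomial.eval t) key
    simpa [Polynomial.eval_comp] using this
  obtain ⟨g, hg⟩ := exists_even_rep f₂ hev
  exact ⟨g, fun t => by rw [hptw t, hg t]⟩

lemma eval_aeval2 (P : MvPolynomial (Fin 2) ℝ) (t : ℝ) :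
    Polynomial.eval t (MvPolynomial.aeval ![Polynomial.X, 0] P) = MvPolynomial.eval ![t, 0] P := by
  induction P using MvPolynomial.induction_on with
  | C a => simp
  | add p q hp hq => simp [hp, hq]
  | mul_X p i hp => fin_cases i <;> simp [hp]

lemma conj_apply (R : Matrix (Fin 2) (Fin 2) ℝ) (M : Matrix (Fin 3) (Fin 3) ℝ) :
    diag1R2 R * M * (diag1R2 R)ᵀ = !![
      M 0 0,
      M 0 1 * R 0 0 + M 0 2 * R 0 1,
      M 0 1 * R 1 0 + M 0 2 * R 1 1;
      R 0 0 * M 1 0 + R 0 1 * M 2 0,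
      R 0 0 * (M 1 1 * R 0 0 + M 1 2 * R 0 1) + R 0 1 * (M 2 1 * R 0 0 + M 2 2 * R 0 1),
      R 0 0 * (M 1 1 * R 1 0 + M 1 2 * R 1 1) + R 0 1 * (M 2 1 * R 1 0 + M 2 2 * R 1 1);
      R 1 0 * M 1 0 + R 1 1 * M 2 0,
      R 1 0 * (M 1 1 * R 0 0 + M 1 2 * R 0 1) + R 1 1 * (M 2 1 * R 0 0 + M 2 2 * R 0 1),
      R 1 0 * (M 1 1 * R 1 0 + M 1 2 * R 1 1) + R 1 1 * (M 2 1 * R 1 0 + M 2 2 * R 1 1)] := by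
  ext i j
  fin_cases i <;> fin_cases j <;>
    simp [diag1R2, Matrix.mul_apply, Fin.sum_univ_three, Matrix.vecMul, dotProduct,
      Matrix.vecHead, Matrix.vecTail, Matrix.transpose_apply] <;> ring

/-- the 3×3-matrix-valued polynomial Fourier symbol
`L(k) = [[σ(k), r(k)ᵀ], [c(k), Q(k)]]` of a linear acoustic-type system in two
space dimensions satisfies `L(Rk) = diag(1,R) L(k) diag(1,R)ᵀ` for all `R ∈ SO(2)`
iff there are one-variable polynomials `a, b, c₁, d, e, m, z, n, h` with
`σ(k) = a(s(k))`, `r(k) = b(s(k)) k + c₁(s(k)) k^⊥`, `c(k) = d(s(k)) k + e(s(k)) k^⊥`,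
`Q(k) = m(s(k)) I₂ + z(s(k)) k kᵀ + n(s(k)) J₀ + h(s(k)) k (k^⊥)ᵀ`. -/
theorem rotation_invariant_acoustic_symbol_2d
    (L : (Fin 2 → ℝ) → Matrix (Fin 3) (Fin 3) ℝ)
    (hL : ∃ P : Matrix (Fin 3) (Fin 3) (MvPolynomial (Fin 2) ℝ),
      ∀ (k : Fin 2 → ℝ) (i j : Fin 3), L k i j = MvPolynomial.eval k (P i j)) :
    (∀ R : Matrix (Fin 2) (Fin 2) ℝ, Rᵀ * R = 1 → R.det = 1 →
      ∀ k : Fin 2 → ℝ, L (R.mulVec k) = diag1R2 R * L k * (diag1R2 R)ᵀ)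
    ↔ ∃ a b c₁ d e m z n h : Polynomial ℝ, ∀ k : Fin 2 → ℝ,
        L k 0 0 = Polynomial.eval (sq2 k) a
        ∧ (∀ i : Fin 2, L k 0 i.succ =
            Polynomial.eval (sq2 k) b * k i + Polynomial.eval (sq2 k) c₁ * perp2 k i)
        ∧ (∀ i : Fin 2, L k i.succ 0 =
            Polynomial.eval (sq2 k) d * k i + Polynomial.eval (sq2 k) e * perp2 k i)
        ∧ (∀ i j : Fin 2, L k i.succ j.succ =
            Polynomial.eval (sq2 k) m * (1 : Matrix (Fin 2) (Fin 2) ℝ) i j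
            + Polynomial.eval (sq2 k) z * (k i * k j)
            + Polynomial.eval (sq2 k) n * J0mat i j
            + Polynomial.eval (sq2 k) h * (k i * perp2 k j)) := by
  constructor
  · intro H
    obtain ⟨P, hP⟩ := hL
    set p : Fin 3 → Fin 3 → Polynomial ℝ :=
      fun i j => MvPolynomial.aeval ![Polynomial.X, 0] (P i j) with hpdef
    have hax : ∀ (t : ℝ) (i j : Fin 3), (p i j).eval t = L ![t, 0] i j := by
      intro t i j
      rw [hP ![t, 0] i j, hpdef]
      exact eval_aeval2 _ t
    -- rotation by π
    have hN1 : (!![(-1:ℝ), 0; 0, -1])ᵀ * !![(-1:ℝ), 0; 0, -1] = 1 := by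
      ext i j
      fin_cases i <;> fin_cases j <;>
        simp [Matrix.mul_apply, Fin.sum_univ_two, Matrix.one_apply, Matrix.transpose_apply,
          Matrix.vecHead, Matrix.vecTail]
    have hN2 : (!![(-1:ℝ), 0; 0, -1]).det = 1 := by
      norm_num [Matrix.det_fin_two_of]
    have hnegmv : ∀ u : ℝ, (!![(-1:ℝ), 0; 0, -1]).mulVec ![u, 0] = ![-u, 0] := by
      intro u
      funext i
      fin_cases i <;> simp [Matrix.mulVec, dotProduct, Fin.sum_univ_two]
    have hnegL : ∀ u : ℝ, ∀ i j : Fin 3, L ![-u, 0] i j =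
        (!![L ![u,0] 0 0,
            L ![u,0] 0 1 * (-1) + L ![u,0] 0 2 * 0,
            L ![u,0] 0 1 * 0 + L ![u,0] 0 2 * (-1);
            (-1) * L ![u,0] 1 0 + 0 * L ![u,0] 2 0,
            (-1) * (L ![u,0] 1 1 * (-1) + L ![u,0] 1 2 * 0) + 0 * (L ![u,0] 2 1 * (-1) + L ![u,0] 2 2 * 0),
            (-1) * (L ![u,0] 1 1 * 0 + L ![u,0] 1 2 * (-1)) + 0 * (L ![u,0] 2 1 * 0 + L ![u,0] 2 2 * (-1));
            0 * L ![u,0] 1 0 + (-1) * L ![u,0] 2 0,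
            0 * (L ![u,0] 1 1 * (-1) + L ![u,0] 1 2 * 0) + (-1) * (L ![u,0] 2 1 * (-1) + L ![u,0] 2 2 * 0),
            0 * (L ![u,0] 1 1 * 0 + L ![u,0] 1 2 * (-1)) + (-1) * (L ![u,0] 2 1 * 0 + L ![u,0] 2 2 * (-1))]) i j := by
      intro u i j
      have h := H _ hN1 hN2 ![u, 0]
      rw [hnegmv u, conj_apply] at h
      have := Matrix.ext_iff.mpr h i j
      simpa using this
    -- parities of the axis polynomials
    have hev00 : ∀ u : ℝ, (p 0 0).eval (-u) = (p 0 0).eval u := by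
      intro u
      rw [hax, hax, hnegL u 0 0]
      simp
    have hodd01 : ∀ u : ℝ, (p 0 1).eval (-u) = - (p 0 1).eval u := by
      intro u
      rw [hax, hax, hnegL u 0 1]
      simp
    have hodd02 : ∀ u : ℝ, (p 0 2).eval (-u) = - (p 0 2).eval u := by
      intro u
      rw [hax, hax, hnegL u 0 2]
      simp
    have hodd10 : ∀ u : ℝ, (p 1 0).eval (-u) = - (p 1 0).eval u := by
      intro u
      rw [hax, hax, hnegL u 1 0]
      simp
    have hodd20 : ∀ u : ℝ, (p 2 0).eval (-u) = - (p 2 0).eval u := by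
      intro u
      rw [hax, hax, hnegL u 2 0]
      simp
    have hev11 : ∀ u : ℝ, (p 1 1).eval (-u) = (p 1 1).eval u := by
      intro u
      rw [hax, hax, hnegL u 1 1]
      simp
    have hev12 : ∀ u : ℝ, (p 1 2).eval (-u) = (p 1 2).eval u := by
      intro u
      rw [hax, hax, hnegL u 1 2]
      simp
    have hev21 : ∀ u : ℝ, (p 2 1).eval (-u) = (p 2 1).eval u := by
      intro u
      rw [hax, hax, hnegL u 2 1]
      simp
    have hev22 : ∀ u : ℝ, (p 2 2).eval (-u) = (p 2 2).eval u := by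
      intro u
      rw [hax, hax, hnegL u 2 2]
      simp
    obtain ⟨a, ha⟩ := exists_even_rep (p 0 0) hev00
    obtain ⟨b, hb⟩ := exists_odd_rep (p 0 1) hodd01
    obtain ⟨c₁', hc'⟩ := exists_odd_rep (p 0 2) hodd02
    obtain ⟨d, hdd⟩ := exists_odd_rep (p 1 0) hodd10
    obtain ⟨e', he'⟩ := exists_odd_rep (p 2 0) hodd20
    obtain ⟨g00, h00⟩ := exists_even_rep (p 1 1) hev11
    obtain ⟨g01, h01⟩ := exists_even_rep (p 1 2) hev12
    obtain ⟨g10, h10⟩ := exists_even_rep (p 2 1) hev21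
    obtain ⟨g11, h11⟩ := exists_even_rep (p 2 2) hev22
    -- constraints at the origin from the rotation J0
    have hJ1 : J0matᵀ * J0mat = 1 := by
      ext i j
      fin_cases i <;> fin_cases j <;>
        simp [J0mat, Matrix.mul_apply, Fin.sum_univ_two, Matrix.one_apply, Matrix.transpose_apply,
          Matrix.vecHead, Matrix.vecTail]
    have hJ2 : J0mat.det = 1 := by
      norm_num [J0mat, Matrix.det_fin_two_of]
    have hJmv : J0mat.mulVec ![(0:ℝ), 0] = ![(0:ℝ), 0] := by
      funext i
      fin_cases i <;> simp [J0mat, Matrix.mulVec, dotProduct, Fin.sum_univ_two]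
    have hJ := H J0mat hJ1 hJ2 ![(0:ℝ), 0]
    rw [hJmv, conj_apply] at hJ
    have c1122 : L ![(0:ℝ), 0] 1 1 = L ![(0:ℝ), 0] 2 2 := by
      have := Matrix.ext_iff.mpr hJ 1 1
      simp [J0mat] at this
      linarith
    have c1221 : L ![(0:ℝ), 0] 1 2 = - L ![(0:ℝ), 0] 2 1 := by
      have := Matrix.ext_iff.mpr hJ 1 2
      simp [J0mat] at this
      linarith
    have hg0 : ∀ (i j : Fin 3) (g : Polynomial ℝ),
        (∀ t : ℝ, (p i j).eval t = g.eval (t ^ 2)) → g.eval 0 = L ![(0:ℝ), 0] i j := by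
      intro i j g hg
      have h1 := hg 0
      rw [hax] at h1
      rw [h1]
      norm_num
    have hz0 : (g00 - g11).eval 0 = 0 := by
      rw [Polynomial.eval_sub, hg0 1 1 g00 h00, hg0 2 2 g11 h11, c1122]
      ring
    have hh0 : (g01 + g10).eval 0 = 0 := by
      rw [Polynomial.eval_add, hg0 1 2 g01 h01, hg0 2 1 g10 h10, c1221]
      ring
    obtain ⟨z, hz⟩ := exists_div_rep (g00 - g11) hz0
    obtain ⟨hq, hhq⟩ := exists_div_rep (g01 + g10) hh0
    refine ⟨a, b, -c₁', d, -e', g11, z, -g10, -hq, ?_⟩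
    intro k
    by_cases hks : sq2 k = 0
    · -- k = 0
      have hk00 : k 0 = 0 := by
        have : k 0 ^ 2 + k 1 ^ 2 = 0 := hks
        nlinarith [sq_nonneg (k 0), sq_nonneg (k 1)]
      have hk11 : k 1 = 0 := by
        have : k 0 ^ 2 + k 1 ^ 2 = 0 := hks
        nlinarith [sq_nonneg (k 0), sq_nonneg (k 1)]
      have hkk : k = ![(0:ℝ), 0] := by
        funext i
        fin_cases i <;> simp [hk00, hk11]
      have e11 := hg0 1 1 g00 h00
      have e12 := hg0 1 2 g01 h01
      have e21 := hg0 2 1 g10 h10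
      have e22 := hg0 2 2 g11 h11
      have hz0' : g00.eval 0 = g11.eval 0 := by
        have := hz0
        rw [Polynomial.eval_sub] at this
        linarith
      have hh0' : g01.eval 0 = - g10.eval 0 := by
        have := hh0
        rw [Polynomial.eval_add] at this
        linarith
      refine ⟨?_, ?_, ?_, ?_⟩
      · rw [hks, hkk, ← hax 0 0 0, ha 0]
        norm_num
      · intro i
        have h1 : L ![(0:ℝ),0] 0 1 = 0 := by
          rw [← hax 0 0 1, hb 0]; ring
        have h2 : L ![(0:ℝ),0] 0 2 = 0 := by
          rw [← hax 0 0 2, hc' 0]; ring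
        rw [hkk]
        fin_cases i <;> simp [h1, h2, hk00, hk11, perp2, Fin.succ]
      · intro i
        have h1 : L ![(0:ℝ),0] 1 0 = 0 := by
          rw [← hax 0 1 0, hdd 0]; ring
        have h2 : L ![(0:ℝ),0] 2 0 = 0 := by
          rw [← hax 0 2 0, he' 0]; ring
        rw [hkk]
        fin_cases i <;> simp [h1, h2, hk00, hk11, perp2, Fin.succ]
      · intro i j
        rw [hks, hkk]
        fin_cases i <;> fin_cases j <;>
          simp [hk00, hk11, perp2, J0mat, Matrix.one_apply, Fin.succ, Polynomial.eval_neg,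
            ← e11, ← e12, ← e21, ← e22] <;>
          linarith [hz0', hh0']
    · -- k ≠ 0
      have hsp : 0 < sq2 k := by
        have h0 : (0:ℝ) ≤ k 0 ^ 2 + k 1 ^ 2 := by positivity
        exact lt_of_le_of_ne h0 (Ne.symm hks)
      obtain ⟨t, htdef⟩ : ∃ x : ℝ, x = Real.sqrt (sq2 k) := ⟨_, rfl⟩
      have ht2 : t ^ 2 = sq2 k := by rw [htdef]; exact Real.sq_sqrt hsp.le
      have ht0 : t ≠ 0 := by rw [htdef]; exact ne_of_gt (Real.sqrt_pos.mpr hsp)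
      have ht2' : t ^ 2 = k 0 ^ 2 + k 1 ^ 2 := ht2
      obtain ⟨cR, hcRdef⟩ : ∃ x : ℝ, x = k 0 / t := ⟨_, rfl⟩
      obtain ⟨sR, hsRdef⟩ : ∃ x : ℝ, x = k 1 / t := ⟨_, rfl⟩
      have hc : cR * t = k 0 := by
        rw [hcRdef]; exact div_mul_cancel₀ (k 0) ht0
      have hs : sR * t = k 1 := by
        rw [hsRdef]; exact div_mul_cancel₀ (k 1) ht0
      have hcs : cR ^ 2 + sR ^ 2 = 1 := by
        rw [hcRdef, hsRdef]
        field_simp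
        linear_combination -ht2'
      have hR1 : (!![cR, -sR; sR, cR])ᵀ * !![cR, -sR; sR, cR] = 1 := by
        ext i j
        fin_cases i <;> fin_cases j
        all_goals simp [Matrix.mul_apply, Fin.sum_univ_two, Matrix.one_apply,
          Matrix.transpose_apply, Matrix.vecHead, Matrix.vecTail]
        all_goals (try ring)
        all_goals linear_combination hcs
      have hRdet : (!![cR, -sR; sR, cR]).det = 1 := by
        rw [Matrix.det_fin_two_of]
        linear_combination hcs
      have hmv : (!![cR, -sR; sR, cR]).mulVec ![t, 0] = k := by
        funext i
        fin_cases i <;>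
          simp [Matrix.mulVec, dotProduct, Fin.sum_univ_two, Matrix.vecHead, Matrix.vecTail] <;>
          (first | linear_combination hc | linear_combination hs)
      have hk := H _ hR1 hRdet ![t, 0]
      rw [hmv, conj_apply] at hk
      have hE := Matrix.ext_iff.mpr hk
      have hM00 : L ![t,0] 0 0 = Polynomial.eval (t^2) a := (hax t 0 0).symm.trans (ha t)
      have hM01 : L ![t,0] 0 1 = t * Polynomial.eval (t^2) b := (hax t 0 1).symm.trans (hb t)
      have hM02 : L ![t,0] 0 2 = t * Polynomial.eval (t^2) c₁' := (hax t 0 2).symm.trans (hc' t)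
      have hM10 : L ![t,0] 1 0 = t * Polynomial.eval (t^2) d := (hax t 1 0).symm.trans (hdd t)
      have hM20 : L ![t,0] 2 0 = t * Polynomial.eval (t^2) e' := (hax t 2 0).symm.trans (he' t)
      have hM11 : L ![t,0] 1 1 = Polynomial.eval (t^2) g00 := (hax t 1 1).symm.trans (h00 t)
      have hM12 : L ![t,0] 1 2 = Polynomial.eval (t^2) g01 := (hax t 1 2).symm.trans (h01 t)
      have hM21 : L ![t,0] 2 1 = Polynomial.eval (t^2) g10 := (hax t 2 1).symm.trans (h10 t)
      have hM22 : L ![t,0] 2 2 = Polynomial.eval (t^2) g11 := (hax t 2 2).symm.trans (h11 t)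
      have hzt : Polynomial.eval (t^2) g00 - Polynomial.eval (t^2) g11
          = t^2 * Polynomial.eval (t^2) z := by
        have := hz (t^2)
        rw [Polynomial.eval_sub] at this
        exact this
      have hht : Polynomial.eval (t^2) g01 + Polynomial.eval (t^2) g10
          = t^2 * Polynomial.eval (t^2) hq := by
        have := hhq (t^2)
        rw [Polynomial.eval_add] at this
        exact this
      refine ⟨?_, ?_, ?_, ?_⟩
      · have h := hE 0 0
        simp at h
        rw [show sq2 k = t^2 from ht2.symm, h, hM00]
      · intro i
        rw [show sq2 k = t^2 from ht2.symm]
        have h1 := hE 0 1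
        have h2 := hE 0 2
        simp at h1 h2
        rw [hM01, hM02] at h1 h2
        fin_cases i
        · simp [perp2, Fin.succ, Polynomial.eval_neg, h1]
          linear_combination Polynomial.eval (t^2) b * hc - Polynomial.eval (t^2) c₁' * hs
        · simp [perp2, Fin.succ, Polynomial.eval_neg, h2]
          linear_combination Polynomial.eval (t^2) b * hs + Polynomial.eval (t^2) c₁' * hc
      · intro i
        rw [show sq2 k = t^2 from ht2.symm]
        have h1 := hE 1 0
        have h2 := hE 2 0
        simp at h1 h2
        rw [hM10, hM20] at h1 h2
        fin_cases i
        · simp [perp2, Fin.succ, Polynomial.eval_neg, h1]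
          linear_combination Polynomial.eval (t^2) d * hc - Polynomial.eval (t^2) e' * hs
        · simp [perp2, Fin.succ, Polynomial.eval_neg, h2]
          linear_combination Polynomial.eval (t^2) d * hs + Polynomial.eval (t^2) e' * hc
      · intro i j
        rw [show sq2 k = t^2 from ht2.symm]
        have h11' := hE 1 1
        have h12' := hE 1 2
        have h21' := hE 2 1
        have h22' := hE 2 2
        simp at h11' h12' h21' h22'
        rw [hM11, hM12, hM21, hM22] at h11' h12' h21' h22'
        fin_cases i <;> fin_cases j
        · simp [perp2, J0mat, Matrix.one_apply, Fin.succ, Polynomial.eval_neg, h11']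
          linear_combination cR^2 * hzt - cR*sR * hht + Polynomial.eval (t^2) g11 * hcs
            + (Polynomial.eval (t^2) z * (cR*t + k 0) - Polynomial.eval (t^2) hq * sR * t) * hc
            - Polynomial.eval (t^2) hq * (k 0) * hs
        · simp [perp2, J0mat, Matrix.one_apply, Fin.succ, Polynomial.eval_neg, h12']
          linear_combination cR*sR * hzt + cR^2 * hht - Polynomial.eval (t^2) g10 * hcs
            + (Polynomial.eval (t^2) z * sR * t + Polynomial.eval (t^2) hq * (cR*t + k 0)) * hc
            + Polynomial.eval (t^2) z * (k 0) * hs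
        · simp [perp2, J0mat, Matrix.one_apply, Fin.succ, Polynomial.eval_neg, h21']
          linear_combination cR*sR * hzt - sR^2 * hht + Polynomial.eval (t^2) g10 * hcs
            + Polynomial.eval (t^2) z * (k 1) * hc
            + (Polynomial.eval (t^2) z * cR * t - Polynomial.eval (t^2) hq * (sR*t + k 1)) * hs
        · simp [perp2, J0mat, Matrix.one_apply, Fin.succ, Polynomial.eval_neg, h22']
          linear_combination sR^2 * hzt + cR*sR * hht + Polynomial.eval (t^2) g11 * hcs
            + Polynomial.eval (t^2) hq * (k 1) * hc
            + (Polynomial.eval (t^2) z * (sR*t + k 1) + Polynomial.eval (t^2) hq * cR * t) * hs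
  · rintro ⟨a, b, c₁, d, e, m, z, n, h, hrep⟩ R hR1 hRdet k
    have e00 := Matrix.ext_iff.mpr hR1 0 0
    have e01 := Matrix.ext_iff.mpr hR1 0 1
    simp [Matrix.mul_apply, Fin.sum_univ_two, Matrix.one_apply, Matrix.transpose_apply]
      at e00 e01
    rw [Matrix.det_fin_two] at hRdet
    have h11 : R 1 1 = R 0 0 := by
      linear_combination (-(R 1 1)) * e00 + (R 0 0) * hRdet + (R 1 0) * e01
    have h01 : R 0 1 = -(R 1 0) := by
      linear_combination (-(R 0 1)) * e00 - (R 1 0) * hRdet + (R 0 0) * e01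
    have hcs : R 0 0 ^ 2 + R 1 0 ^ 2 = 1 := by linear_combination e00
    have hmv0 : (R.mulVec k) 0 = R 0 0 * k 0 - R 1 0 * k 1 := by
      simp [Matrix.mulVec, dotProduct, Fin.sum_univ_two, h01]
      ring
    have hmv1 : (R.mulVec k) 1 = R 1 0 * k 0 + R 0 0 * k 1 := by
      simp [Matrix.mulVec, dotProduct, Fin.sum_univ_two, h11]
      try ring
    have hsq : sq2 (R.mulVec k) = sq2 k := by
      simp only [sq2, hmv0, hmv1]
      linear_combination (k 0 ^ 2 + k 1 ^ 2) * hcs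
    obtain ⟨k1R, k2R, k3R, k4R⟩ := hrep (R.mulVec k)
    obtain ⟨q1, q2, q3, q4⟩ := hrep k
    rw [hsq] at k1R
    have E00 : L (R.mulVec k) 0 0 = Polynomial.eval (sq2 k) a := k1R
    have E01 : L (R.mulVec k) 0 1 = Polynomial.eval (sq2 k) b * (R.mulVec k) 0
        + Polynomial.eval (sq2 k) c₁ * (R.mulVec k) 1 := by
      have := k2R 0
      rw [hsq] at this
      simpa [perp2, Fin.succ_zero_eq_one, Fin.succ_one_eq_two] using this
    have E02 : L (R.mulVec k) 0 2 = Polynomial.eval (sq2 k) b * (R.mulVec k) 1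
        - Polynomial.eval (sq2 k) c₁ * (R.mulVec k) 0 := by
      have := k2R 1
      rw [hsq] at this
      simp [perp2, Fin.succ_zero_eq_one, Fin.succ_one_eq_two] at this ⊢
      rw [this]
      try ring
    have E10 : L (R.mulVec k) 1 0 = Polynomial.eval (sq2 k) d * (R.mulVec k) 0
        + Polynomial.eval (sq2 k) e * (R.mulVec k) 1 := by
      have := k3R 0
      rw [hsq] at this
      simpa [perp2, Fin.succ_zero_eq_one, Fin.succ_one_eq_two] using this
    have E20 : L (R.mulVec k) 2 0 = Polynomial.eval (sq2 k) d * (R.mulVec k) 1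
        - Polynomial.eval (sq2 k) e * (R.mulVec k) 0 := by
      have := k3R 1
      rw [hsq] at this
      simp [perp2, Fin.succ_zero_eq_one, Fin.succ_one_eq_two] at this ⊢
      rw [this]
      try ring
    have E11 : L (R.mulVec k) 1 1 = Polynomial.eval (sq2 k) m
        + Polynomial.eval (sq2 k) z * ((R.mulVec k) 0 * (R.mulVec k) 0)
        + Polynomial.eval (sq2 k) h * ((R.mulVec k) 0 * (R.mulVec k) 1) := by
      have := k4R 0 0
      rw [hsq] at this
      simp [perp2, J0mat, Matrix.one_apply, Fin.succ_zero_eq_one, Fin.succ_one_eq_two] at this ⊢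
      rw [this]
      try ring
    have E12 : L (R.mulVec k) 1 2 = Polynomial.eval (sq2 k) z * ((R.mulVec k) 0 * (R.mulVec k) 1)
        + Polynomial.eval (sq2 k) n
        - Polynomial.eval (sq2 k) h * ((R.mulVec k) 0 * (R.mulVec k) 0) := by
      have := k4R 0 1
      rw [hsq] at this
      simp [perp2, J0mat, Matrix.one_apply, Fin.succ_zero_eq_one, Fin.succ_one_eq_two] at this ⊢
      rw [this]
      try ring
    have E21 : L (R.mulVec k) 2 1 = Polynomial.eval (sq2 k) z * ((R.mulVec k) 0 * (R.mulVec k) 1)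
        - Polynomial.eval (sq2 k) n
        + Polynomial.eval (sq2 k) h * ((R.mulVec k) 1 * (R.mulVec k) 1) := by
      have := k4R 1 0
      rw [hsq] at this
      simp [perp2, J0mat, Matrix.one_apply, Fin.succ_zero_eq_one, Fin.succ_one_eq_two] at this ⊢
      rw [this]
      try ring
    have E22 : L (R.mulVec k) 2 2 = Polynomial.eval (sq2 k) m
        + Polynomial.eval (sq2 k) z * ((R.mulVec k) 1 * (R.mulVec k) 1)
        - Polynomial.eval (sq2 k) h * ((R.mulVec k) 0 * (R.mulVec k) 1) := by
      have := k4R 1 1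
      rw [hsq] at this
      simp [perp2, J0mat, Matrix.one_apply, Fin.succ_zero_eq_one, Fin.succ_one_eq_two] at this ⊢
      rw [this]
      try ring
    have K00 : L k 0 0 = Polynomial.eval (sq2 k) a := q1
    have K01 : L k 0 1 = Polynomial.eval (sq2 k) b * k 0 + Polynomial.eval (sq2 k) c₁ * k 1 := by
      simpa [perp2, Fin.succ_zero_eq_one, Fin.succ_one_eq_two] using q2 0
    have K02 : L k 0 2 = Polynomial.eval (sq2 k) b * k 1 - Polynomial.eval (sq2 k) c₁ * k 0 := by
      have := q2 1
      simp [perp2, Fin.succ_zero_eq_one, Fin.succ_one_eq_two] at this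
      rw [this]
      try ring
    have K10 : L k 1 0 = Polynomial.eval (sq2 k) d * k 0 + Polynomial.eval (sq2 k) e * k 1 := by
      simpa [perp2, Fin.succ_zero_eq_one, Fin.succ_one_eq_two] using q3 0
    have K20 : L k 2 0 = Polynomial.eval (sq2 k) d * k 1 - Polynomial.eval (sq2 k) e * k 0 := by
      have := q3 1
      simp [perp2, Fin.succ_zero_eq_one, Fin.succ_one_eq_two] at this
      rw [this]
      try ring
    have K11 : L k 1 1 = Polynomial.eval (sq2 k) m
        + Polynomial.eval (sq2 k) z * (k 0 * k 0)
        + Polynomial.eval (sq2 k) h * (k 0 * k 1) := by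
      have := q4 0 0
      simp [perp2, J0mat, Matrix.one_apply, Fin.succ_zero_eq_one, Fin.succ_one_eq_two] at this
      rw [this]
      try ring
    have K12 : L k 1 2 = Polynomial.eval (sq2 k) z * (k 0 * k 1)
        + Polynomial.eval (sq2 k) n - Polynomial.eval (sq2 k) h * (k 0 * k 0) := by
      have := q4 0 1
      simp [perp2, J0mat, Matrix.one_apply, Fin.succ_zero_eq_one, Fin.succ_one_eq_two] at this
      rw [this]
      try ring
    have K21 : L k 2 1 = Polynomial.eval (sq2 k) z * (k 0 * k 1)
        - Polynomial.eval (sq2 k) n + Polynomial.eval (sq2 k) h * (k 1 * k 1) := by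
      have := q4 1 0
      simp [perp2, J0mat, Matrix.one_apply, Fin.succ_zero_eq_one, Fin.succ_one_eq_two] at this
      rw [this]
      try ring
    have K22 : L k 2 2 = Polynomial.eval (sq2 k) m
        + Polynomial.eval (sq2 k) z * (k 1 * k 1)
        - Polynomial.eval (sq2 k) h * (k 0 * k 1) := by
      have := q4 1 1
      simp [perp2, J0mat, Matrix.one_apply, Fin.succ_zero_eq_one, Fin.succ_one_eq_two] at this
      rw [this]
      try ring
    rw [conj_apply]
    ext i j
    fin_cases i <;> fin_cases j
    all_goals simp only [Fin.zero_eta, Fin.mk_one,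
      show (⟨2, by norm_num⟩ : Fin 3) = 2 from rfl, Fin.isValue,
      Matrix.cons_val', Matrix.cons_val_zero, Matrix.cons_val_one,
      Matrix.head_cons, Matrix.empty_val', Matrix.cons_val_fin_one, Matrix.head_fin_const,
      Matrix.cons_val_two, Matrix.tail_cons, Matrix.of_apply]
    · show L (R.mulVec k) 0 0 = _
      rw [E00, K00]
    · show L (R.mulVec k) 0 1 = _
      rw [E01, K01, K02, hmv0, hmv1]
      simp only [h01, h11]
      ring
    · show L (R.mulVec k) 0 2 = _
      rw [E02, K01, K02, hmv0, hmv1]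
      simp only [h01, h11]
      ring
    · show L (R.mulVec k) 1 0 = _
      rw [E10, K10, K20, hmv0, hmv1]
      simp only [h01, h11]
      ring
    · show L (R.mulVec k) 1 1 = _
      rw [E11, K11, K12, K21, K22, hmv0, hmv1]
      simp only [h01, h11]
      first
        | linear_combination (Polynomial.eval (sq2 k) m) * hcs
        | linear_combination (-(Polynomial.eval (sq2 k) m)) * hcs
        | linear_combination (Polynomial.eval (sq2 k) n) * hcs
        | linear_combination (-(Polynomial.eval (sq2 k) n)) * hcs
    · show L (R.mulVec k) 1 2 = _
      rw [E12, K11, K12, K21, K22, hmv0, hmv1]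
      simp only [h01, h11]
      first
        | linear_combination (Polynomial.eval (sq2 k) m) * hcs
        | linear_combination (-(Polynomial.eval (sq2 k) m)) * hcs
        | linear_combination (Polynomial.eval (sq2 k) n) * hcs
        | linear_combination (-(Polynomial.eval (sq2 k) n)) * hcs
    · show L (R.mulVec k) 2 0 = _
      rw [E20, K10, K20, hmv0, hmv1]
      simp only [h01, h11]
      ring
    · show L (R.mulVec k) 2 1 = _
      rw [E21, K11, K12, K21, K22, hmv0, hmv1]
      simp only [h01, h11]
      first
        | linear_combination (Polynomial.eval (sq2 k) m) * hcs
        | linear_combination (-(Polynomial.eval (sq2 k) m)) * hcs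
        | linear_combination (Polynomial.eval (sq2 k) n) * hcs
        | linear_combination (-(Polynomial.eval (sq2 k) n)) * hcs
    · show L (R.mulVec k) 2 2 = _
      rw [E22, K11, K12, K21, K22, hmv0, hmv1]
      simp only [h01, h11]
      first
        | linear_combination (Polynomial.eval (sq2 k) m) * hcs
        | linear_combination (-(Polynomial.eval (sq2 k) m)) * hcs
        | linear_combination (Polynomial.eval (sq2 k) n) * hcs
        | linear_combination (-(Polynomial.eval (sq2 k) n)) * hcs
end

section
/- Let L : ℝ³ → M₄(ℝ) be a polynomial map, written in block form L(k) = [[σ(k), r(k)ᵀ], [c(k), Q(k)]] with σ(k) ∈ ℝ, r(k), c(k) ∈ ℝ³ and Q(k) ∈ M₃(ℝ). Then L(Rk) = diag(1,R) · L(k) · diag(1,R)ᵀ for all R ∈ SO(3) and all k ∈ ℝ³ if and only if there exist one-variable real polynomials a, b, d, m, z, f such that for all k ∈ ℝ³: σ(k) = a(s(k)), r(k) = b(s(k)) k, c(k) = d(s(k)) k, and Q(k) = m(s(k)) I₃ + z(s(k)) k kᵀ + f(s(k)) [k]_×. (This is the Fourier-symbol form of the statement that a general linear acoustic-type partial differential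 system in three space dimensions, for a scalar density field ρ and a momentum vector field J, is invariant by rotation exactly when it has the form ∂_tρ + Σ_k(α_k Δ^k ρ + β_k div Δ^k J) = 0, ∂_t J + Σ_k(δ_k ∇Δ^k ρ + μ_k Δ^k J + η_k ∇div Δ^k J + φ_k curl Δ^k J) = 0 with finitely many nonzero real coefficients.) -/
open Matrix

/-- The squared norm `s(k) = k_x² + k_y² + k_z²`. -/
def sq3 (k : Fin 3 → ℝ) : ℝ := k 0 ^ 2 + k 1 ^ 2 + k 2 ^ 2

/-- The antisymmetric matrix `[k]_×` of the cross product: `[k]_× w = k × w`. -/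
def crossMat (k : Fin 3 → ℝ) : Matrix (Fin 3) (Fin 3) ℝ :=
  !![0, -k 2, k 1; k 2, 0, -k 0; -k 1, k 0, 0]

/-- The block-diagonal matrix `diag(1, R)` of size 4×4. -/
def diag1R3 (R : Matrix (Fin 3) (Fin 3) ℝ) : Matrix (Fin 4) (Fin 4) ℝ :=
  !![1, 0, 0, 0;
     0, R 0 0, R 0 1, R 0 2;
     0, R 1 0, R 1 1, R 1 2;
     0, R 2 0, R 2 1, R 2 2]

/-- `e1v t = (t, 0, 0)`. -/
def e1v (t : ℝ) : Fin 3 → ℝ := fun i => if i = 0 then t else 0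


lemma crossMat_conj_id (M : Matrix (Fin 3) (Fin 3) ℝ) (u : Fin 3 → ℝ) :
    Mᵀ * crossMat (M.mulVec u) * M = M.det • crossMat u := by
  ext i j
  fin_cases i <;> fin_cases j <;>
    simp [crossMat, Matrix.mul_apply, Matrix.mulVec, dotProduct,
      Matrix.det_fin_three, Fin.sum_univ_three] <;> ring

lemma crossMat_rot (R : Matrix (Fin 3) (Fin 3) ℝ) (u : Fin 3 → ℝ)
    (h1 : Rᵀ * R = 1) (h2 : R.det = 1) :
    R * crossMat u * Rᵀ = crossMat (R.mulVec u) := by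
  have hc : R * Rᵀ = 1 := mul_eq_one_comm.mp h1
  have key := crossMat_conj_id R u
  rw [h2, one_smul] at key
  calc R * crossMat u * Rᵀ
      = R * (Rᵀ * crossMat (R.mulVec u) * R) * Rᵀ := by rw [key]
    _ = (R * Rᵀ) * crossMat (R.mulVec u) * (R * Rᵀ) := by
        simp only [Matrix.mul_assoc]
    _ = crossMat (R.mulVec u) := by rw [hc, Matrix.one_mul, Matrix.mul_one]

lemma sq3_rot (R : Matrix (Fin 3) (Fin 3) ℝ) (k : Fin 3 → ℝ)
    (h1 : Rᵀ * R = 1) : sq3 (R.mulVec k) = sq3 k := by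
  have h := fun a b : Fin 3 => congrFun (congrFun h1 a) b
  simp only [Matrix.mul_apply, Matrix.transpose_apply, Fin.sum_univ_three,
    Matrix.one_apply] at h
  have h00 := h 0 0; have h01 := h 0 1; have h02 := h 0 2
  have h11 := h 1 1; have h12 := h 1 2; have h22 := h 2 2
  norm_num at h00 h01 h11 h22
  rw [if_neg (by decide : ¬(0 : Fin 3) = 2)] at h02
  rw [if_neg (by decide : ¬(1 : Fin 3) = 2)] at h12
  simp only [sq3, Matrix.mulVec, dotProduct, Fin.sum_univ_three]
  linear_combination (k 0)^2 * h00 + 2 * k 0 * k 1 * h01 + 2 * k 0 * k 2 * h02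
    + (k 1)^2 * h11 + 2 * k 1 * k 2 * h12 + (k 2)^2 * h22

lemma RRt (R : Matrix (Fin 3) (Fin 3) ℝ) (h1 : Rᵀ * R = 1) (a b : Fin 3) :
    R a 0 * R b 0 + R a 1 * R b 1 + R a 2 * R b 2 = if a = b then 1 else 0 := by
  have hc : R * Rᵀ = 1 := mul_eq_one_comm.mp h1
  have h := congrFun (congrFun hc a) b
  simpa [Matrix.mul_apply, Fin.sum_univ_three, Matrix.one_apply] using h

lemma dmul (R : Matrix (Fin 3) (Fin 3) ℝ) (M : Matrix (Fin 4) (Fin 4) ℝ) (i j : Fin 4) :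
    (diag1R3 R * M * (diag1R3 R)ᵀ) i j
      = ∑ l : Fin 4, ∑ l' : Fin 4, diag1R3 R i l * M l l' * diag1R3 R j l' := by
  simp only [Matrix.mul_apply, Matrix.transpose_apply, Finset.sum_mul]
  rw [Finset.sum_comm]

lemma sfin3 : ((0 : Fin 3).succ : Fin 4) = 1 ∧ ((1 : Fin 3).succ : Fin 4) = 2
    ∧ ((2 : Fin 3).succ : Fin 4) = 3 := by
  refine ⟨rfl, rfl, rfl⟩

lemma d00 (R : Matrix (Fin 3) (Fin 3) ℝ) (M : Matrix (Fin 4) (Fin 4) ℝ) :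
    (diag1R3 R * M * (diag1R3 R)ᵀ) 0 0 = M 0 0 := by
  rw [dmul]
  simp only [Fin.sum_univ_four]
  simp [diag1R3, Matrix.vecHead, Matrix.vecTail]

lemma d0j (R : Matrix (Fin 3) (Fin 3) ℝ) (M : Matrix (Fin 4) (Fin 4) ℝ) (j : Fin 3) :
    (diag1R3 R * M * (diag1R3 R)ᵀ) 0 j.succ
      = M 0 1 * R j 0 + M 0 2 * R j 1 + M 0 3 * R j 2 := by
  rw [dmul]
  simp only [Fin.sum_univ_four]
  fin_cases j <;>
    · simp [diag1R3, Matrix.vecHead, Matrix.vecTail]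
      try ring

lemma di0 (R : Matrix (Fin 3) (Fin 3) ℝ) (M : Matrix (Fin 4) (Fin 4) ℝ) (i : Fin 3) :
    (diag1R3 R * M * (diag1R3 R)ᵀ) i.succ 0
      = R i 0 * M 1 0 + R i 1 * M 2 0 + R i 2 * M 3 0 := by
  rw [dmul]
  simp only [Fin.sum_univ_four]
  fin_cases i <;>
    · simp [diag1R3, Matrix.vecHead, Matrix.vecTail]
      try ring

lemma dij (R : Matrix (Fin 3) (Fin 3) ℝ) (M : Matrix (Fin 4) (Fin 4) ℝ) (i j : Fin 3) :
    (diag1R3 R * M * (diag1R3 R)ᵀ) i.succ j.succ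
      = R i 0 * (M 1 1 * R j 0 + M 1 2 * R j 1 + M 1 3 * R j 2)
      + R i 1 * (M 2 1 * R j 0 + M 2 2 * R j 1 + M 2 3 * R j 2)
      + R i 2 * (M 3 1 * R j 0 + M 3 2 * R j 1 + M 3 3 * R j 2) := by
  rw [dmul]
  simp only [Fin.sum_univ_four]
  fin_cases i <;> fin_cases j <;>
    · simp [diag1R3, Matrix.vecHead, Matrix.vecTail]
      try ring

lemma eval_ite_sum (S : Finset ℕ) (g : ℕ → Polynomial ℝ) (t : ℝ) (pr : ℕ → Prop)
    [DecidablePred pr] :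
    Polynomial.eval t (∑ i ∈ S, if pr i then g i else 0)
      = ∑ i ∈ S, if pr i then Polynomial.eval t (g i) else 0 := by
  rw [Polynomial.eval_finset_sum]
  exact Finset.sum_congr rfl fun i _ => by split <;> simp

lemma coeff_odd_eq_zero {p : Polynomial ℝ} (h : ∀ t : ℝ, p.eval (-t) = p.eval t) :
    ∀ n, Odd n → p.coeff n = 0 := by
  set N := p.natDegree + 1 with hN
  set q : Polynomial ℝ := ∑ i ∈ Finset.range N, if Odd i then Polynomial.C (p.coeff i) * Polynomial.X ^ i else 0
    with hq
  have hq0 : q = 0 := by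
    apply Polynomial.funext
    intro t
    have he : ∀ x : ℝ, p.eval x = ∑ i ∈ Finset.range N, p.coeff i * x ^ i :=
      fun x => Polynomial.eval_eq_sum_range x
    have h2 : (2 : ℝ) * q.eval t = p.eval t - p.eval (-t) := by
      rw [hq, eval_ite_sum, he t, he (-t), ← Finset.sum_sub_distrib,
        Finset.mul_sum]
      refine Finset.sum_congr rfl fun i _ => ?_
      rcases Nat.even_or_odd i with hi | hi
      · rw [if_neg (by simpa using hi), hi.neg_pow]
        ring
      · rw [if_pos hi, hi.neg_pow]
        simp
        ring
    rw [h t, sub_self] at h2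
    have : q.eval t = 0 := by linarith
    simpa using this
  intro n hn
  by_cases hlt : n < N
  · have hc := congrArg (fun r : Polynomial ℝ => r.coeff n) hq0
    simp only [Polynomial.coeff_zero] at hc
    rw [hq, Polynomial.finset_sum_coeff] at hc
    rw [Finset.sum_eq_single n] at hc
    · rwa [if_pos hn, Polynomial.coeff_C_mul, Polynomial.coeff_X_pow,
        if_pos rfl, mul_one] at hc
    · intro i _ hne
      split
      · rw [Polynomial.coeff_C_mul, Polynomial.coeff_X_pow,
          if_neg (fun hh => hne hh.symm), mul_zero]
      · simp
    · intro hmem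
      exact absurd (Finset.mem_range.mpr hlt) hmem
  · exact Polynomial.coeff_eq_zero_of_natDegree_lt (by omega)

lemma coeff_even_eq_zero {p : Polynomial ℝ} (h : ∀ t : ℝ, p.eval (-t) = - p.eval t) :
    ∀ n, Even n → p.coeff n = 0 := by
  set N := p.natDegree + 1 with hN
  set q : Polynomial ℝ := ∑ i ∈ Finset.range N, if Even i then Polynomial.C (p.coeff i) * Polynomial.X ^ i else 0
    with hq
  have hq0 : q = 0 := by
    apply Polynomial.funext
    intro t
    have he : ∀ x : ℝ, p.eval x = ∑ i ∈ Finset.range N, p.coeff i * x ^ i :=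
      fun x => Polynomial.eval_eq_sum_range x
    have h2 : (2 : ℝ) * q.eval t = p.eval t + p.eval (-t) := by
      rw [hq, eval_ite_sum, he t, he (-t), ← Finset.sum_add_distrib,
        Finset.mul_sum]
      refine Finset.sum_congr rfl fun i _ => ?_
      rcases Nat.even_or_odd i with hi | hi
      · rw [if_pos hi, hi.neg_pow]
        simp
        ring
      · rw [if_neg (by simpa using hi), hi.neg_pow]
        ring
    rw [h t, add_neg_cancel] at h2
    have : q.eval t = 0 := by linarith
    simpa using this
  intro n hn
  by_cases hlt : n < N
  · have hc := congrArg (fun r : Polynomial ℝ => r.coeff n) hq0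
    simp only [Polynomial.coeff_zero] at hc
    rw [hq, Polynomial.finset_sum_coeff] at hc
    rw [Finset.sum_eq_single n] at hc
    · rwa [if_pos hn, Polynomial.coeff_C_mul, Polynomial.coeff_X_pow,
        if_pos rfl, mul_one] at hc
    · intro i _ hne
      split
      · rw [Polynomial.coeff_C_mul, Polynomial.coeff_X_pow,
          if_neg (fun hh => hne hh.symm), mul_zero]
      · simp
    · intro hmem
      exact absurd (Finset.mem_range.mpr hlt) hmem
  · exact Polynomial.coeff_eq_zero_of_natDegree_lt (by omega)

lemma even_poly {p : Polynomial ℝ} (h : ∀ t : ℝ, p.eval (-t) = p.eval t) :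
    ∃ q : Polynomial ℝ, ∀ t : ℝ, p.eval t = q.eval (t ^ 2) := by
  have hodd := coeff_odd_eq_zero h
  set N := p.natDegree + 1 with hN
  refine ⟨∑ i ∈ Finset.range N, if Even i then Polynomial.C (p.coeff i) * Polynomial.X ^ (i / 2) else 0,
    fun t => ?_⟩
  rw [eval_ite_sum, Polynomial.eval_eq_sum_range t]
  refine Finset.sum_congr rfl fun i _ => ?_
  rcases Nat.even_or_odd i with hi | hi
  · rw [if_pos hi]
    obtain ⟨c, rfl⟩ := hi
    simp only [Polynomial.eval_mul, Polynomial.eval_C, Polynomial.eval_pow,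
      Polynomial.eval_X]
    rw [← pow_mul]
    have h2 : 2 * ((c + c) / 2) = c + c := by omega
    rw [h2]
  · rw [if_neg (by simpa using hi), hodd i hi, zero_mul]

lemma odd_poly {p : Polynomial ℝ} (h : ∀ t : ℝ, p.eval (-t) = - p.eval t) :
    ∃ q : Polynomial ℝ, ∀ t : ℝ, p.eval t = t * q.eval (t ^ 2) := by
  have heven := coeff_even_eq_zero h
  set N := p.natDegree + 1 with hN
  refine ⟨∑ i ∈ Finset.range N, if Odd i then Polynomial.C (p.coeff i) * Polynomial.X ^ ((i - 1) / 2) else 0,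
    fun t => ?_⟩
  rw [eval_ite_sum, Polynomial.eval_eq_sum_range t, Finset.mul_sum]
  refine Finset.sum_congr rfl fun i _ => ?_
  rcases Nat.even_or_odd i with hi | hi
  · rw [if_neg (by simpa using hi), heven i hi, zero_mul, mul_zero]
  · rw [if_pos hi]
    obtain ⟨c, rfl⟩ := hi
    simp only [Polynomial.eval_mul, Polynomial.eval_C, Polynomial.eval_pow,
      Polynomial.eval_X]
    rw [← pow_mul]
    have h2 : 2 * ((2 * c + 1 - 1) / 2) = 2 * c := by omega
    rw [h2]
    ring

lemma sub_root_zero {A B : Polynomial ℝ} (h : A.eval 0 = B.eval 0) :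
    ∃ z : Polynomial ℝ, ∀ s : ℝ, A.eval s = B.eval s + s * z.eval s := by
  refine ⟨(A - B).divX, fun s => ?_⟩
  have h0 : (A - B).coeff 0 = 0 := by
    rw [Polynomial.coeff_zero_eq_eval_zero, Polynomial.eval_sub, h, sub_self]
  have := Polynomial.X_mul_divX_add (A - B)
  have he := congrArg (Polynomial.eval s) this
  rw [h0] at he
  simp only [Polynomial.eval_add, Polynomial.eval_mul, Polynomial.eval_X,
    Polynomial.eval_sub, Polynomial.eval_C, Polynomial.map_zero,
    Polynomial.eval_zero] at he
  linarith

noncomputable def lineP (q : MvPolynomial (Fin 3) ℝ) : Polynomial ℝ :=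
  MvPolynomial.aeval (fun i : Fin 3 => if i = 0 then (Polynomial.X : Polynomial ℝ) else 0) q

lemma lineP_eval (q : MvPolynomial (Fin 3) ℝ) (t : ℝ) :
    (lineP q).eval t = MvPolynomial.eval (e1v t) q := by
  induction q using MvPolynomial.induction_on with
  | C a => simp [lineP]
  | add p r hp hr => simp [lineP, Polynomial.eval_add, hp, hr] at *
  | mul_X p i hp =>
    simp only [lineP, _root_.map_mul, Polynomial.eval_mul, MvPolynomial.aeval_X,
      MvPolynomial.eval_X] at *
    rw [hp]
    congr 1
    split <;> simp_all [e1v]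

lemma exists_rot (k : Fin 3 → ℝ) : ∃ R : Matrix (Fin 3) (Fin 3) ℝ,
    Rᵀ * R = 1 ∧ R.det = 1 ∧
    R.mulVec (e1v (Real.sqrt (sq3 k))) = k := by
  by_cases hk : k = 0
  · refine ⟨1, by simp, by simp, ?_⟩
    subst hk
    funext i
    simp [sq3, e1v, Matrix.mulVec, dotProduct]
  · set k' : EuclideanSpace ℝ (Fin 3) := (WithLp.equiv 2 (Fin 3 → ℝ)).symm k with hk'def
    have happ : ∀ i, k' i = k i := fun i => rfl
    have hk' : k' ≠ 0 := by
      intro h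
      apply hk
      funext i
      rw [← happ i, h]
      rfl
    have hnk : ‖k'‖ ≠ 0 := norm_ne_zero_iff.mpr hk'
    set u : EuclideanSpace ℝ (Fin 3) := ‖k'‖⁻¹ • k' with hu
    have huapp : ∀ i, u i = ‖k'‖⁻¹ * k i := fun i => rfl
    have hun : ‖u‖ = 1 := by
      rw [hu, norm_smul, norm_inv, norm_norm, inv_mul_cancel₀ hnk]
    have hortho : Orthonormal ℝ (({0} : Set (Fin 3)).restrict
        (fun _ : Fin 3 => u)) := by
      rw [orthonormal_iff_ite]
      intro i j
      have : i = j := Subsingleton.elim i j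
      subst this
      rw [if_pos rfl]
      show (inner ℝ u u : ℝ) = 1
      rw [real_inner_self_eq_norm_sq, hun, one_pow]
    obtain ⟨b, hb⟩ := hortho.exists_orthonormalBasis_extension_of_card_eq
      (by simp [finrank_euclideanSpace_fin])
    have hb0 : b 0 = u := hb 0 (Set.mem_singleton 0)
    set R : Matrix (Fin 3) (Fin 3) ℝ := fun i j => b j i with hR
    have hRtR : Rᵀ * R = 1 := by
      ext i j
      have h2 := orthonormal_iff_ite.mp b.orthonormal i j
      rw [PiLp.inner_apply] at h2
      simp only [RCLike.inner_apply, starRingEnd_apply, star_trivial] at h2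
      simp only [Matrix.mul_apply, Matrix.transpose_apply, Matrix.one_apply, hR]
      rw [← h2]
      show ∑ x : Fin 3, b i x * b j x = _
      exact Finset.sum_congr rfl fun x _ => mul_comm _ _
    have hdet2 : R.det * R.det = 1 := by
      have := congrArg Matrix.det hRtR
      rwa [Matrix.det_mul, Matrix.det_transpose, Matrix.det_one] at this
    have hcol : ∀ i, R i 0 = u i := by
      intro i
      rw [hR]
      show b 0 i = u i
      rw [hb0]
    have hsq : Real.sqrt (sq3 k) = ‖k'‖ := by
      rw [EuclideanSpace.norm_eq]
      congr 1
      simp only [Fin.sum_univ_three, happ, Real.norm_eq_abs, sq_abs, sq3]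
    have hmul : ∀ (S : Matrix (Fin 3) (Fin 3) ℝ), (∀ i, S i 0 = u i) →
        S.mulVec (fun i => if i = 0 then Real.sqrt (sq3 k) else 0) = k := by
      intro S hS
      funext i
      simp only [Matrix.mulVec, dotProduct, Fin.sum_univ_three, e1v]
      norm_num
      rw [hS i, huapp i, hsq]
      field_simp
      rw [if_neg (by decide : ¬(2 : Fin 3) = 0), add_zero]
    rcases mul_self_eq_one_iff.mp hdet2 with hdet | hdet
    · exact ⟨R, hRtR, hdet, hmul R hcol⟩
    · set D : Matrix (Fin 3) (Fin 3) ℝ := !![1,0,0;0,1,0;0,0,-1] with hD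
      refine ⟨R * D, ?_, ?_, ?_⟩
      · have hDT : Dᵀ = D := by
          ext i j
          fin_cases i <;> fin_cases j <;> rfl
        rw [Matrix.transpose_mul, Matrix.mul_assoc, ← Matrix.mul_assoc Rᵀ, hRtR,
          Matrix.one_mul, hDT, hD]
        norm_num [Matrix.mul_fin_three]
        exact Matrix.one_fin_three.symm
      · rw [Matrix.det_mul, hdet, hD]
        simp [Matrix.det_fin_three]
      · apply hmul
        intro i
        rw [← hcol i, Matrix.mul_apply, Fin.sum_univ_three]
        have e0 : D 0 0 = 1 := rfl
        have e1 : D 1 0 = 0 := rfl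
        have e2 : D 2 0 = 0 := rfl
        rw [e0, e1, e2]
        ring

def PxM : Matrix (Fin 3) (Fin 3) ℝ := !![1, 0, 0; 0, -1, 0; 0, 0, -1]
def JxM : Matrix (Fin 3) (Fin 3) ℝ := !![1, 0, 0; 0, 0, -1; 0, 1, 0]
def PzM : Matrix (Fin 3) (Fin 3) ℝ := !![-1, 0, 0; 0, -1, 0; 0, 0, 1]
def ZqM : Matrix (Fin 3) (Fin 3) ℝ := !![0, -1, 0; 1, 0, 0; 0, 0, 1]

lemma PxM_orth : PxMᵀ * PxM = 1 := by
  have hT : PxMᵀ = !![1, 0, 0; 0, -1, 0; 0, 0, -1] := by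
    ext i j
    fin_cases i <;> fin_cases j <;> rfl
  rw [hT, PxM]
  norm_num [Matrix.mul_fin_three]
  exact Matrix.one_fin_three.symm

lemma PxM_det : PxM.det = 1 := by
  simp [PxM, Matrix.det_fin_three]

lemma JxM_orth : JxMᵀ * JxM = 1 := by
  have hT : JxMᵀ = !![1, 0, 0; 0, 0, 1; 0, -1, 0] := by
    ext i j
    fin_cases i <;> fin_cases j <;> rfl
  rw [hT, JxM]
  norm_num [Matrix.mul_fin_three]
  exact Matrix.one_fin_three.symm

lemma JxM_det : JxM.det = 1 := by
  simp [JxM, Matrix.det_fin_three]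

lemma PzM_orth : PzMᵀ * PzM = 1 := by
  have hT : PzMᵀ = !![-1, 0, 0; 0, -1, 0; 0, 0, 1] := by
    ext i j
    fin_cases i <;> fin_cases j <;> rfl
  rw [hT, PzM]
  norm_num [Matrix.mul_fin_three]
  exact Matrix.one_fin_three.symm

lemma PzM_det : PzM.det = 1 := by
  simp [PzM, Matrix.det_fin_three]

lemma ZqM_orth : ZqMᵀ * ZqM = 1 := by
  have hT : ZqMᵀ = !![0, 1, 0; -1, 0, 0; 0, 0, 1] := by
    ext i j
    fin_cases i <;> fin_cases j <;> rfl
  rw [hT, ZqM]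
  norm_num [Matrix.mul_fin_three]
  exact Matrix.one_fin_three.symm

lemma ZqM_det : ZqM.det = 1 := by
  simp [ZqM, Matrix.det_fin_three]

lemma mulVec_e1 (M : Matrix (Fin 3) (Fin 3) ℝ) (t : ℝ) :
    M *ᵥ e1v t = fun i => t * M i 0 := by
  funext i
  simp only [Matrix.mulVec, dotProduct, Fin.sum_univ_three, e1v]
  rw [if_neg (by decide : ¬(1 : Fin 3) = 0),
    if_neg (by decide : ¬(2 : Fin 3) = 0)]
  simp [mul_comm]

lemma Px_fix (t : ℝ) : PxM *ᵥ e1v t = e1v t := by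
  rw [mulVec_e1]
  funext i
  fin_cases i <;> norm_num [PxM, e1v, Fin.ext_iff]

lemma Jx_fix (t : ℝ) : JxM *ᵥ e1v t = e1v t := by
  rw [mulVec_e1]
  funext i
  fin_cases i <;> norm_num [JxM, e1v, Fin.ext_iff]

lemma Pz_neg (t : ℝ) : PzM *ᵥ e1v t = e1v (-t) := by
  rw [mulVec_e1]
  funext i
  fin_cases i <;> norm_num [PzM, e1v, Fin.ext_iff]

lemma Zq_fix0 : ZqM *ᵥ e1v 0 = e1v 0 := by
  rw [mulVec_e1]
  funext i
  fin_cases i <;> norm_num [ZqM, e1v, Fin.ext_iff]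

lemma crossConjEntry (R : Matrix (Fin 3) (Fin 3) ℝ) (k : Fin 3 → ℝ) (i j : Fin 3) :
    (R * crossMat k * Rᵀ) i j
      = R i 0 * (k 1 * R j 2 - k 2 * R j 1) + R i 1 * (k 2 * R j 0 - k 0 * R j 2)
        + R i 2 * (k 0 * R j 1 - k 1 * R j 0) := by
  simp only [Matrix.mul_apply, Matrix.transpose_apply, Fin.sum_univ_three]
  rw [show crossMat k 0 0 = 0 from rfl, show crossMat k 0 1 = -(k 2) from rfl,
    show crossMat k 0 2 = k 1 from rfl, show crossMat k 1 0 = k 2 from rfl,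
    show crossMat k 1 1 = 0 from rfl, show crossMat k 1 2 = -(k 0) from rfl,
    show crossMat k 2 0 = -(k 1) from rfl, show crossMat k 2 1 = k 0 from rfl,
    show crossMat k 2 2 = 0 from rfl]
  ring

lemma crossMat_mulVec_entry (R : Matrix (Fin 3) (Fin 3) ℝ) (k : Fin 3 → ℝ)
    (h1 : Rᵀ * R = 1) (h2 : R.det = 1) (i j : Fin 3) :
    crossMat (R *ᵥ k) i j
      = R i 0 * (k 1 * R j 2 - k 2 * R j 1) + R i 1 * (k 2 * R j 0 - k 0 * R j 2)
        + R i 2 * (k 0 * R j 1 - k 1 * R j 0) := by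
  rw [← crossMat_rot R k h1 h2]
  exact crossConjEntry R k i j

lemma fs0 : ((0 : Fin 3).succ : Fin 4) = 1 := rfl
lemma fs1 : ((1 : Fin 3).succ : Fin 4) = 2 := rfl
lemma fs2 : ((2 : Fin 3).succ : Fin 4) = 3 := rfl


/-- the 4×4-matrix-valued polynomial Fourier symbol
`L(k) = [[σ(k), r(k)ᵀ], [c(k), Q(k)]]` of a linear acoustic-type system in three
space dimensions satisfies `L(Rk) = diag(1,R) L(k) diag(1,R)ᵀ` for all `R ∈ SO(3)`
iff there are one-variable polynomials `a, b, d, m, z, f` with `σ(k) = a(s(k))`,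
`r(k) = b(s(k)) k`, `c(k) = d(s(k)) k`, and `Q(k) = m(s(k)) I₃ + z(s(k)) k kᵀ + f(s(k)) [k]_×`. -/
theorem rotation_invariant_acoustic_symbol_3d
    (L : (Fin 3 → ℝ) → Matrix (Fin 4) (Fin 4) ℝ)
    (hL : ∃ P : Matrix (Fin 4) (Fin 4) (MvPolynomial (Fin 3) ℝ),
      ∀ (k : Fin 3 → ℝ) (i j : Fin 4), L k i j = MvPolynomial.eval k (P i j)) :
    (∀ R : Matrix (Fin 3) (Fin 3) ℝ, Rᵀ * R = 1 → R.det = 1 →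
      ∀ k : Fin 3 → ℝ, L (R.mulVec k) = diag1R3 R * L k * (diag1R3 R)ᵀ)
    ↔ ∃ a b d m z f : Polynomial ℝ, ∀ k : Fin 3 → ℝ,
        L k 0 0 = Polynomial.eval (sq3 k) a
        ∧ (∀ i : Fin 3, L k 0 i.succ = Polynomial.eval (sq3 k) b * k i)
        ∧ (∀ i : Fin 3, L k i.succ 0 = Polynomial.eval (sq3 k) d * k i)
        ∧ (∀ i j : Fin 3, L k i.succ j.succ =
            Polynomial.eval (sq3 k) m * (1 : Matrix (Fin 3) (Fin 3) ℝ) i j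
            + Polynomial.eval (sq3 k) z * (k i * k j)
            + Polynomial.eval (sq3 k) f * crossMat k i j) := by
  constructor
  · -- forward direction
    intro H
    obtain ⟨P, hP⟩ := hL
    have hline : ∀ (t : ℝ) (i j : Fin 4),
        L (e1v t) i j = (lineP (P i j)).eval t := by
      intro t i j
      rw [hP (e1v t) i j, lineP_eval]
    have hE0 : ∀ R : Matrix (Fin 3) (Fin 3) ℝ, Rᵀ * R = 1 → R.det = 1 →
        ∀ k : Fin 3 → ℝ, L (R *ᵥ k) 0 0 = L k 0 0 := by
      intro R p q k
      rw [H R p q k]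
      exact d00 R (L k)
    have hEr : ∀ R : Matrix (Fin 3) (Fin 3) ℝ, Rᵀ * R = 1 → R.det = 1 →
        ∀ (k : Fin 3 → ℝ) (j : Fin 3), L (R *ᵥ k) 0 j.succ
          = L k 0 1 * R j 0 + L k 0 2 * R j 1 + L k 0 3 * R j 2 := by
      intro R p q k j
      rw [H R p q k]
      exact d0j R (L k) j
    have hEc : ∀ R : Matrix (Fin 3) (Fin 3) ℝ, Rᵀ * R = 1 → R.det = 1 →
        ∀ (k : Fin 3 → ℝ) (i : Fin 3), L (R *ᵥ k) i.succ 0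
          = R i 0 * L k 1 0 + R i 1 * L k 2 0 + R i 2 * L k 3 0 := by
      intro R p q k i
      rw [H R p q k]
      exact di0 R (L k) i
    have hEQ : ∀ R : Matrix (Fin 3) (Fin 3) ℝ, Rᵀ * R = 1 → R.det = 1 →
        ∀ (k : Fin 3 → ℝ) (i j : Fin 3), L (R *ᵥ k) i.succ j.succ
          = R i 0 * (L k 1 1 * R j 0 + L k 1 2 * R j 1 + L k 1 3 * R j 2)
          + R i 1 * (L k 2 1 * R j 0 + L k 2 2 * R j 1 + L k 2 3 * R j 2)
          + R i 2 * (L k 3 1 * R j 0 + L k 3 2 * R j 1 + L k 3 3 * R j 2) := by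
      intro R p q k i j
      rw [H R p q k]
      exact dij R (L k) i j
    have h02 : ∀ t : ℝ, L (e1v t) 0 2 = 0 := by
      intro t
      have h := hEr PxM PxM_orth PxM_det (e1v t) 1
      rw [Px_fix t] at h
      simp only [fs1, show PxM 0 0 = 1 from rfl, show PxM 0 1 = 0 from rfl, show PxM 0 2 = 0 from rfl, show PxM 1 0 = 0 from rfl, show PxM 1 1 = -1 from rfl, show PxM 1 2 = 0 from rfl, show PxM 2 0 = 0 from rfl, show PxM 2 1 = 0 from rfl, show PxM 2 2 = -1 from rfl] at h
      linear_combination h / 2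
    have h03 : ∀ t : ℝ, L (e1v t) 0 3 = 0 := by
      intro t
      have h := hEr PxM PxM_orth PxM_det (e1v t) 2
      rw [Px_fix t] at h
      simp only [fs2, show PxM 0 0 = 1 from rfl, show PxM 0 1 = 0 from rfl, show PxM 0 2 = 0 from rfl, show PxM 1 0 = 0 from rfl, show PxM 1 1 = -1 from rfl, show PxM 1 2 = 0 from rfl, show PxM 2 0 = 0 from rfl, show PxM 2 1 = 0 from rfl, show PxM 2 2 = -1 from rfl] at h
      linear_combination h / 2
    have h20 : ∀ t : ℝ, L (e1v t) 2 0 = 0 := by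
      intro t
      have h := hEc PxM PxM_orth PxM_det (e1v t) 1
      rw [Px_fix t] at h
      simp only [fs1, show PxM 0 0 = 1 from rfl, show PxM 0 1 = 0 from rfl, show PxM 0 2 = 0 from rfl, show PxM 1 0 = 0 from rfl, show PxM 1 1 = -1 from rfl, show PxM 1 2 = 0 from rfl, show PxM 2 0 = 0 from rfl, show PxM 2 1 = 0 from rfl, show PxM 2 2 = -1 from rfl] at h
      linear_combination h / 2
    have h30 : ∀ t : ℝ, L (e1v t) 3 0 = 0 := by
      intro t
      have h := hEc PxM PxM_orth PxM_det (e1v t) 2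
      rw [Px_fix t] at h
      simp only [fs2, show PxM 0 0 = 1 from rfl, show PxM 0 1 = 0 from rfl, show PxM 0 2 = 0 from rfl, show PxM 1 0 = 0 from rfl, show PxM 1 1 = -1 from rfl, show PxM 1 2 = 0 from rfl, show PxM 2 0 = 0 from rfl, show PxM 2 1 = 0 from rfl, show PxM 2 2 = -1 from rfl] at h
      linear_combination h / 2
    have q12 : ∀ t : ℝ, L (e1v t) 1 2 = 0 := by
      intro t
      have h := hEQ PxM PxM_orth PxM_det (e1v t) 0 1
      rw [Px_fix t] at h
      simp only [fs0, fs1, show PxM 0 0 = 1 from rfl, show PxM 0 1 = 0 from rfl, show PxM 0 2 = 0 from rfl, show PxM 1 0 = 0 from rfl, show PxM 1 1 = -1 from rfl, show PxM 1 2 = 0 from rfl, show PxM 2 0 = 0 from rfl, show PxM 2 1 = 0 from rfl, show PxM 2 2 = -1 from rfl] at h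
      linear_combination h / 2
    have q13 : ∀ t : ℝ, L (e1v t) 1 3 = 0 := by
      intro t
      have h := hEQ PxM PxM_orth PxM_det (e1v t) 0 2
      rw [Px_fix t] at h
      simp only [fs0, fs2, show PxM 0 0 = 1 from rfl, show PxM 0 1 = 0 from rfl, show PxM 0 2 = 0 from rfl, show PxM 1 0 = 0 from rfl, show PxM 1 1 = -1 from rfl, show PxM 1 2 = 0 from rfl, show PxM 2 0 = 0 from rfl, show PxM 2 1 = 0 from rfl, show PxM 2 2 = -1 from rfl] at h
      linear_combination h / 2
    have q21 : ∀ t : ℝ, L (e1v t) 2 1 = 0 := by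
      intro t
      have h := hEQ PxM PxM_orth PxM_det (e1v t) 1 0
      rw [Px_fix t] at h
      simp only [fs0, fs1, show PxM 0 0 = 1 from rfl, show PxM 0 1 = 0 from rfl, show PxM 0 2 = 0 from rfl, show PxM 1 0 = 0 from rfl, show PxM 1 1 = -1 from rfl, show PxM 1 2 = 0 from rfl, show PxM 2 0 = 0 from rfl, show PxM 2 1 = 0 from rfl, show PxM 2 2 = -1 from rfl] at h
      linear_combination h / 2
    have q31 : ∀ t : ℝ, L (e1v t) 3 1 = 0 := by
      intro t
      have h := hEQ PxM PxM_orth PxM_det (e1v t) 2 0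
      rw [Px_fix t] at h
      simp only [fs0, fs2, show PxM 0 0 = 1 from rfl, show PxM 0 1 = 0 from rfl, show PxM 0 2 = 0 from rfl, show PxM 1 0 = 0 from rfl, show PxM 1 1 = -1 from rfl, show PxM 1 2 = 0 from rfl, show PxM 2 0 = 0 from rfl, show PxM 2 1 = 0 from rfl, show PxM 2 2 = -1 from rfl] at h
      linear_combination h / 2
    have q33 : ∀ t : ℝ, L (e1v t) 3 3 = L (e1v t) 2 2 := by
      intro t
      have h := hEQ JxM JxM_orth JxM_det (e1v t) 1 1
      rw [Jx_fix t] at h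
      simp only [fs1, show JxM 0 0 = 1 from rfl, show JxM 0 1 = 0 from rfl, show JxM 0 2 = 0 from rfl, show JxM 1 0 = 0 from rfl, show JxM 1 1 = 0 from rfl, show JxM 1 2 = -1 from rfl, show JxM 2 0 = 0 from rfl, show JxM 2 1 = 1 from rfl, show JxM 2 2 = 0 from rfl] at h
      linear_combination -h
    have q23 : ∀ t : ℝ, L (e1v t) 2 3 = - L (e1v t) 3 2 := by
      intro t
      have h := hEQ JxM JxM_orth JxM_det (e1v t) 1 2
      rw [Jx_fix t] at h
      simp only [fs1, fs2, show JxM 0 0 = 1 from rfl, show JxM 0 1 = 0 from rfl, show JxM 0 2 = 0 from rfl, show JxM 1 0 = 0 from rfl, show JxM 1 1 = 0 from rfl, show JxM 1 2 = -1 from rfl, show JxM 2 0 = 0 from rfl, show JxM 2 1 = 1 from rfl, show JxM 2 2 = 0 from rfl] at h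
      linear_combination h
    have p00 : ∀ t : ℝ, L (e1v (-t)) 0 0 = L (e1v t) 0 0 := by
      intro t
      have h := hE0 PzM PzM_orth PzM_det (e1v t)
      rw [Pz_neg t] at h
      linear_combination h
    have p01 : ∀ t : ℝ, L (e1v (-t)) 0 1 = - L (e1v t) 0 1 := by
      intro t
      have h := hEr PzM PzM_orth PzM_det (e1v t) 0
      rw [Pz_neg t] at h
      simp only [fs0, show PzM 0 0 = -1 from rfl, show PzM 0 1 = 0 from rfl, show PzM 0 2 = 0 from rfl, show PzM 1 0 = 0 from rfl, show PzM 1 1 = -1 from rfl, show PzM 1 2 = 0 from rfl, show PzM 2 0 = 0 from rfl, show PzM 2 1 = 0 from rfl, show PzM 2 2 = 1 from rfl] at h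
      linear_combination h
    have p10 : ∀ t : ℝ, L (e1v (-t)) 1 0 = - L (e1v t) 1 0 := by
      intro t
      have h := hEc PzM PzM_orth PzM_det (e1v t) 0
      rw [Pz_neg t] at h
      simp only [fs0, show PzM 0 0 = -1 from rfl, show PzM 0 1 = 0 from rfl, show PzM 0 2 = 0 from rfl, show PzM 1 0 = 0 from rfl, show PzM 1 1 = -1 from rfl, show PzM 1 2 = 0 from rfl, show PzM 2 0 = 0 from rfl, show PzM 2 1 = 0 from rfl, show PzM 2 2 = 1 from rfl] at h
      linear_combination h
    have p11 : ∀ t : ℝ, L (e1v (-t)) 1 1 = L (e1v t) 1 1 := by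
      intro t
      have h := hEQ PzM PzM_orth PzM_det (e1v t) 0 0
      rw [Pz_neg t] at h
      simp only [fs0, show PzM 0 0 = -1 from rfl, show PzM 0 1 = 0 from rfl, show PzM 0 2 = 0 from rfl, show PzM 1 0 = 0 from rfl, show PzM 1 1 = -1 from rfl, show PzM 1 2 = 0 from rfl, show PzM 2 0 = 0 from rfl, show PzM 2 1 = 0 from rfl, show PzM 2 2 = 1 from rfl] at h
      linear_combination h
    have p22 : ∀ t : ℝ, L (e1v (-t)) 2 2 = L (e1v t) 2 2 := by
      intro t
      have h := hEQ PzM PzM_orth PzM_det (e1v t) 1 1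
      rw [Pz_neg t] at h
      simp only [fs1, show PzM 0 0 = -1 from rfl, show PzM 0 1 = 0 from rfl, show PzM 0 2 = 0 from rfl, show PzM 1 0 = 0 from rfl, show PzM 1 1 = -1 from rfl, show PzM 1 2 = 0 from rfl, show PzM 2 0 = 0 from rfl, show PzM 2 1 = 0 from rfl, show PzM 2 2 = 1 from rfl] at h
      linear_combination h
    have p32 : ∀ t : ℝ, L (e1v (-t)) 3 2 = - L (e1v t) 3 2 := by
      intro t
      have h := hEQ PzM PzM_orth PzM_det (e1v t) 2 1
      rw [Pz_neg t] at h
      simp only [fs1, fs2, show PzM 0 0 = -1 from rfl, show PzM 0 1 = 0 from rfl, show PzM 0 2 = 0 from rfl, show PzM 1 0 = 0 from rfl, show PzM 1 1 = -1 from rfl, show PzM 1 2 = 0 from rfl, show PzM 2 0 = 0 from rfl, show PzM 2 1 = 0 from rfl, show PzM 2 2 = 1 from rfl] at h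
      linear_combination h
    have base0 : L (e1v 0) 1 1 = L (e1v 0) 2 2 := by
      have h := hEQ ZqM ZqM_orth ZqM_det (e1v 0) 0 0
      rw [Zq_fix0] at h
      simp only [fs0, show ZqM 0 0 = 0 from rfl, show ZqM 0 1 = -1 from rfl, show ZqM 0 2 = 0 from rfl, show ZqM 1 0 = 1 from rfl, show ZqM 1 1 = 0 from rfl, show ZqM 1 2 = 0 from rfl, show ZqM 2 0 = 0 from rfl, show ZqM 2 1 = 0 from rfl, show ZqM 2 2 = 1 from rfl] at h
      linear_combination h
    obtain ⟨qa, hqa⟩ := even_poly (p := lineP (P 0 0))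
      (fun t => by rw [← hline, ← hline]; exact p00 t)
    obtain ⟨qb, hqb⟩ := odd_poly (p := lineP (P 0 1))
      (fun t => by rw [← hline, ← hline]; exact p01 t)
    obtain ⟨qd, hqd⟩ := odd_poly (p := lineP (P 1 0))
      (fun t => by rw [← hline, ← hline]; exact p10 t)
    obtain ⟨qA, hqA⟩ := even_poly (p := lineP (P 1 1))
      (fun t => by rw [← hline, ← hline]; exact p11 t)
    obtain ⟨qm, hqm⟩ := even_poly (p := lineP (P 2 2))
      (fun t => by rw [← hline, ← hline]; exact p22 t)
    obtain ⟨qf, hqf⟩ := odd_poly (p := lineP (P 3 2))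
      (fun t => by rw [← hline, ← hline]; exact p32 t)
    have hbase : qA.eval 0 = qm.eval 0 := by
      have e := base0
      rw [hline 0 1 1, hline 0 2 2, hqA 0, hqm 0] at e
      norm_num at e
      exact e
    obtain ⟨qz, hqz⟩ := sub_root_zero hbase
    refine ⟨qa, qb, qd, qm, qz, qf, fun k => ?_⟩
    obtain ⟨R, h1, h2, hk⟩ := exists_rot k
    set t := Real.sqrt (sq3 k) with ht
    have hs0 : (0 : ℝ) ≤ sq3 k := by
      simp only [sq3]
      positivity
    have ht2 : t ^ 2 = sq3 k := Real.sq_sqrt hs0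
    have hki : ∀ i, k i = t * R i 0 := by
      intro i
      conv_lhs => rw [← hk, mulVec_e1]
    refine ⟨?_, fun j => ?_, fun i => ?_, fun i j => ?_⟩
    · have e : L k 0 0 = (lineP (P 0 0)).eval t := by
        rw [← hk, hE0 R h1 h2, hline]
      rw [e, hqa, ht2]
    · have e := hEr R h1 h2 (e1v t) j
      rw [hk] at e
      rw [e, h02 t, h03 t, hline t 0 1, hqb t, ht2, hki j]
      ring
    · have e := hEc R h1 h2 (e1v t) i
      rw [hk] at e
      rw [e, h20 t, h30 t, hline t 1 0, hqd t, ht2, hki i]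
      ring
    · have e := hEQ R h1 h2 (e1v t) i j
      rw [hk] at e
      have hcm : crossMat k i j
          = R i 1 * (-(t * R j 2)) + R i 2 * (t * R j 1) := by
        conv_lhs => rw [← hk]
        rw [crossMat_mulVec_entry R (e1v t) h1 h2 i j]
        norm_num [e1v, Fin.ext_iff]
      rw [e, q12 t, q13 t, q21 t, q31 t, q33 t, q23 t,
        hline t 1 1, hline t 2 2, hline t 3 2, hqA t, hqm t, hqf t,
        hqz (t ^ 2), ← ht2, Matrix.one_apply, ← RRt R h1 i j, hcm,
        hki i, hki j]
      ring
  · -- reverse direction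
    rintro ⟨a, b, d, m, z, f, hform⟩ R h1 h2 k
    have hs : sq3 (R.mulVec k) = sq3 k := sq3_rot R k h1
    have hmv : ∀ (v : Fin 3 → ℝ) (i : Fin 3),
        (R *ᵥ v) i = R i 0 * v 0 + R i 1 * v 1 + R i 2 * v 2 := by
      intro v i
      simp [Matrix.mulVec, dotProduct, Fin.sum_univ_three]
    obtain ⟨hA, hB, hD, hQ⟩ := hform k
    obtain ⟨hA', hB', hD', hQ'⟩ := hform (R *ᵥ k)
    have one00 : (1 : Matrix (Fin 3) (Fin 3) ℝ) 0 0 = 1 := by norm_num [Matrix.one_apply, Fin.ext_iff]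
    have one11 : (1 : Matrix (Fin 3) (Fin 3) ℝ) 1 1 = 1 := by norm_num [Matrix.one_apply, Fin.ext_iff]
    have one22 : (1 : Matrix (Fin 3) (Fin 3) ℝ) 2 2 = 1 := by norm_num [Matrix.one_apply, Fin.ext_iff]
    have one01 : (1 : Matrix (Fin 3) (Fin 3) ℝ) 0 1 = 0 := by norm_num [Matrix.one_apply, Fin.ext_iff]
    have one02 : (1 : Matrix (Fin 3) (Fin 3) ℝ) 0 2 = 0 := by norm_num [Matrix.one_apply, Fin.ext_iff]
    have one10 : (1 : Matrix (Fin 3) (Fin 3) ℝ) 1 0 = 0 := by norm_num [Matrix.one_apply, Fin.ext_iff]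
    have one12 : (1 : Matrix (Fin 3) (Fin 3) ℝ) 1 2 = 0 := by norm_num [Matrix.one_apply, Fin.ext_iff]
    have one20 : (1 : Matrix (Fin 3) (Fin 3) ℝ) 2 0 = 0 := by norm_num [Matrix.one_apply, Fin.ext_iff]
    have one21 : (1 : Matrix (Fin 3) (Fin 3) ℝ) 2 1 = 0 := by norm_num [Matrix.one_apply, Fin.ext_iff]
    have E11 : L k 1 1 = Polynomial.eval (sq3 k) m
        + Polynomial.eval (sq3 k) z * (k 0 * k 0) :=
      (hQ 0 0).trans (by rw [one00, show crossMat k 0 0 = 0 from rfl]; ring)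
    have E12 : L k 1 2 = Polynomial.eval (sq3 k) z * (k 0 * k 1)
        + Polynomial.eval (sq3 k) f * (-(k 2)) :=
      (hQ 0 1).trans (by rw [one01, show crossMat k 0 1 = -(k 2) from rfl]; ring)
    have E13 : L k 1 3 = Polynomial.eval (sq3 k) z * (k 0 * k 2)
        + Polynomial.eval (sq3 k) f * (k 1) :=
      (hQ 0 2).trans (by rw [one02, show crossMat k 0 2 = k 1 from rfl]; ring)
    have E21 : L k 2 1 = Polynomial.eval (sq3 k) z * (k 1 * k 0)
        + Polynomial.eval (sq3 k) f * (k 2) :=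
      (hQ 1 0).trans (by rw [one10, show crossMat k 1 0 = k 2 from rfl]; ring)
    have E22 : L k 2 2 = Polynomial.eval (sq3 k) m
        + Polynomial.eval (sq3 k) z * (k 1 * k 1) :=
      (hQ 1 1).trans (by rw [one11, show crossMat k 1 1 = 0 from rfl]; ring)
    have E23 : L k 2 3 = Polynomial.eval (sq3 k) z * (k 1 * k 2)
        + Polynomial.eval (sq3 k) f * (-(k 0)) :=
      (hQ 1 2).trans (by rw [one12, show crossMat k 1 2 = -(k 0) from rfl]; ring)
    have E31 : L k 3 1 = Polynomial.eval (sq3 k) z * (k 2 * k 0)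
        + Polynomial.eval (sq3 k) f * (-(k 1)) :=
      (hQ 2 0).trans (by rw [one20, show crossMat k 2 0 = -(k 1) from rfl]; ring)
    have E32 : L k 3 2 = Polynomial.eval (sq3 k) z * (k 2 * k 1)
        + Polynomial.eval (sq3 k) f * (k 0) :=
      (hQ 2 1).trans (by rw [one21, show crossMat k 2 1 = k 0 from rfl]; ring)
    have E33 : L k 3 3 = Polynomial.eval (sq3 k) m
        + Polynomial.eval (sq3 k) z * (k 2 * k 2) :=
      (hQ 2 2).trans (by rw [one22, show crossMat k 2 2 = 0 from rfl]; ring)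
    have EB1 : L k 0 1 = Polynomial.eval (sq3 k) b * k 0 := hB 0
    have EB2 : L k 0 2 = Polynomial.eval (sq3 k) b * k 1 := hB 1
    have EB3 : L k 0 3 = Polynomial.eval (sq3 k) b * k 2 := hB 2
    have ED1 : L k 1 0 = Polynomial.eval (sq3 k) d * k 0 := hD 0
    have ED2 : L k 2 0 = Polynomial.eval (sq3 k) d * k 1 := hD 1
    have ED3 : L k 3 0 = Polynomial.eval (sq3 k) d * k 2 := hD 2
    ext i j
    induction i using Fin.cases with
    | zero =>
      induction j using Fin.cases with
      | zero => rw [d00, hA', hA, hs]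
      | succ j' =>
        rw [d0j, hB' j', EB1, EB2, EB3, hs, hmv k j']
        ring
    | succ i' =>
      induction j using Fin.cases with
      | zero =>
        rw [di0, hD' i', ED1, ED2, ED3, hs, hmv k i']
        ring
      | succ j' =>
        rw [dij, hQ' i' j', E11, E12, E13, E21, E22, E23, E31, E32, E33, hs,
          Matrix.one_apply, ← RRt R h1 i' j',
          crossMat_mulVec_entry R k h1 h2 i' j', hmv k i', hmv k j']
        ring
end

section
/- Let p ∈ ℝ[X, Y, Z] be a real polynomial in three variables. Then p(Rk) = p(k) for all R ∈ SO(3) and all k ∈ ℝ³ if and only if there exists a one-variable real polynomial u such that p(k) = u(s(k)) for all k ∈ ℝ³, i.e. p is a polynomial in X² + Y² + Z². -/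
set_option maxHeartbeats 1000000

open Matrix

section helpers
open Polynomial Finset

lemma sum_range_two_mul (a : ℕ → ℝ) (N : ℕ) :
    ∑ m ∈ Finset.range (2 * N), a m = ∑ n ∈ Finset.range N, (a (2 * n) + a (2 * n + 1)) := by
  induction N with
  | zero => simp
  | succ N ih =>
    rw [Finset.sum_range_succ, ← ih, Nat.mul_succ, show 2*N+2 = (2*N+1)+1 by ring,
      Finset.sum_range_succ, Finset.sum_range_succ]
    ring

lemma coeff_comp_neg_X (f : Polynomial ℝ) (n : ℕ) :
    (f.comp (-X)).coeff n = (-1) ^ n * f.coeff n := by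
  induction f using Polynomial.induction_on' with
  | add p q hp hq => simp [add_comp, hp, hq]; ring
  | monomial m a =>
    have hpow : ((-X : Polynomial ℝ)) ^ m = C ((-1 : ℝ) ^ m) * X ^ m := by
      rw [neg_pow, map_pow, map_neg, _root_.map_one]
    rw [monomial_comp, hpow, ← mul_assoc, ← C_mul, coeff_C_mul, coeff_X_pow, coeff_monomial]
    split_ifs <;> subst_vars <;> simp_all <;> try ring

lemma even_poly_s5 (f : Polynomial ℝ) (h : ∀ t : ℝ, f.eval (-t) = f.eval t) :
    ∃ u : Polynomial ℝ, ∀ t : ℝ, f.eval t = u.eval (t ^ 2) := by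
  have hc : f.comp (-X) = f := by
    apply Polynomial.funext
    intro t
    simp [eval_comp, h t]
  have hodd : ∀ n, f.coeff (2 * n + 1) = 0 := by
    intro n
    have := coeff_comp_neg_X f (2 * n + 1)
    rw [hc] at this
    have h2 : (-1 : ℝ) ^ (2 * n + 1) = -1 := by
      simp [pow_succ, pow_mul]
    rw [h2] at this
    linarith
  refine ⟨∑ n ∈ Finset.range (f.natDegree + 1), C (f.coeff (2 * n)) * X ^ n, fun t => ?_⟩
  rw [Polynomial.eval_finset_sum]
  simp only [eval_mul, eval_C, eval_pow, eval_X]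
  rw [Polynomial.eval_eq_sum_range' (n := 2 * (f.natDegree + 1)) (by omega)]
  rw [sum_range_two_mul]
  congr 1
  ext n
  rw [hodd n, pow_mul]
  ring

end helpers

/-- a three-variable real polynomial is invariant under all rotations
of space iff it is a polynomial in `X² + Y² + Z²`. -/
theorem rotation_invariant_poly_3d (p : MvPolynomial (Fin 3) ℝ) :
    (∀ R : Matrix (Fin 3) (Fin 3) ℝ, Rᵀ * R = 1 → R.det = 1 →
      ∀ k : Fin 3 → ℝ, MvPolynomial.eval (R.mulVec k) p = MvPolynomial.eval k p)
    ↔ ∃ u : Polynomial ℝ, ∀ k : Fin 3 → ℝ,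
        MvPolynomial.eval k p = Polynomial.eval (k 0 ^ 2 + k 1 ^ 2 + k 2 ^ 2) u := by
  constructor
  · intro h
    -- the restriction of p to the x-axis, as a one-variable polynomial
    set f : Polynomial ℝ := MvPolynomial.aeval ![Polynomial.X, 0, 0] p with hf
    have heval : ∀ t : ℝ, f.eval t = MvPolynomial.eval ![t, 0, 0] p := by
      intro t
      have hcomp := MvPolynomial.comp_aeval (R := ℝ) (f := ![Polynomial.X, (0:Polynomial ℝ), 0])
        (φ := Polynomial.aeval t)
      have h2 := AlgHom.congr_fun hcomp p
      simp only [AlgHom.coe_comp, Function.comp_apply] at h2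
      rw [hf, ← Polynomial.coe_aeval_eq_eval, ← MvPolynomial.coe_aeval_eq_eval]
      have hfun : (fun i => (Polynomial.aeval t) (![Polynomial.X, (0:Polynomial ℝ), 0] i))
          = ![t, 0, 0] := by
        funext i; fin_cases i <;> simp
      rw [h2, hfun]; rfl
    -- f is even, via the rotation diag(-1, -1, 1)
    have heven : ∀ t : ℝ, f.eval (-t) = f.eval t := by
      intro t
      have horth : (!![(-1:ℝ),0,0;0,-1,0;0,0,1])ᵀ * !![(-1:ℝ),0,0;0,-1,0;0,0,1] = 1 := by
        ext i j; fin_cases i <;> fin_cases j <;>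
          simp [Matrix.mul_apply, Matrix.vecHead, Matrix.vecTail, Matrix.transpose_apply, Matrix.one_apply, Fin.sum_univ_three]
      have hdet : (!![(-1:ℝ),0,0;0,-1,0;0,0,1]).det = 1 := by
        simp [Matrix.det_fin_three]
      have hinv := h _ horth hdet ![t, 0, 0]
      have hmv : (!![(-1:ℝ),0,0;0,-1,0;0,0,1]).mulVec ![t, 0, 0] = ![-t, 0, 0] := by
        funext i; fin_cases i <;>
          simp [Matrix.mulVec, dotProduct, Matrix.vecHead, Matrix.vecTail, Fin.sum_univ_three]
      rw [hmv] at hinv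
      rw [heval, heval, hinv]
    obtain ⟨u, hu⟩ := even_poly_s5 f heven
    refine ⟨u, fun k => ?_⟩
    suffices hs : ∃ t : ℝ, t ^ 2 = k 0 ^ 2 + k 1 ^ 2 + k 2 ^ 2 ∧
        MvPolynomial.eval k p = MvPolynomial.eval ![t, 0, 0] p by
      obtain ⟨t, ht, hk⟩ := hs
      rw [hk, ← heval, hu, ht]
    rcases eq_or_ne (k 0 ^ 2 + k 1 ^ 2) 0 with hxy | hxy
    · -- k lies on the z-axis; rotate about the y-axis by 90°
      have hx : k 0 = 0 := by nlinarith [sq_nonneg (k 0), sq_nonneg (k 1)]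
      have hy : k 1 = 0 := by nlinarith [sq_nonneg (k 0), sq_nonneg (k 1)]
      refine ⟨k 2, by rw [hx, hy]; ring, ?_⟩
      have horth : (!![(0:ℝ),0,1;0,1,0;-1,0,0])ᵀ * !![(0:ℝ),0,1;0,1,0;-1,0,0] = 1 := by
        ext i j; fin_cases i <;> fin_cases j <;>
          simp [Matrix.mul_apply, Matrix.vecHead, Matrix.vecTail, Matrix.transpose_apply, Matrix.one_apply, Fin.sum_univ_three]
      have hdet : (!![(0:ℝ),0,1;0,1,0;-1,0,0]).det = 1 := by
        simp [Matrix.det_fin_three]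
      have hinv := h _ horth hdet k
      have hmv : (!![(0:ℝ),0,1;0,1,0;-1,0,0]).mulVec k = ![k 2, 0, 0] := by
        funext i; fin_cases i <;>
          simp [Matrix.mulVec, dotProduct, Matrix.vecHead, Matrix.vecTail, Fin.sum_univ_three, hx, hy]
      rw [hmv] at hinv
      exact hinv.symm
    · -- generic case: two explicit rotations bring k to the positive x-axis
      have hxy' : 0 < k 0 ^ 2 + k 1 ^ 2 :=
        lt_of_le_of_ne (by positivity) (Ne.symm hxy)
      set ρ : ℝ := Real.sqrt (k 0 ^ 2 + k 1 ^ 2) with hρdef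
      have hρ : 0 < ρ := Real.sqrt_pos.2 hxy'
      have hρ2 : ρ ^ 2 = k 0 ^ 2 + k 1 ^ 2 := Real.sq_sqrt hxy'.le
      set r : ℝ := Real.sqrt (k 0 ^ 2 + k 1 ^ 2 + k 2 ^ 2) with hrdef
      have hrpos : 0 < r := Real.sqrt_pos.2 (by positivity)
      have hr2 : r ^ 2 = k 0 ^ 2 + k 1 ^ 2 + k 2 ^ 2 :=
        Real.sq_sqrt (by positivity)
      set R1 : Matrix (Fin 3) (Fin 3) ℝ :=
        !![k 0 / ρ, k 1 / ρ, 0; -(k 1 / ρ), k 0 / ρ, 0; 0, 0, 1] with hR1def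
      set R2 : Matrix (Fin 3) (Fin 3) ℝ :=
        !![ρ / r, 0, k 2 / r; 0, 1, 0; -(k 2 / r), 0, ρ / r] with hR2def
      have horth1 : R1ᵀ * R1 = 1 := by
        ext i j; fin_cases i <;> fin_cases j <;>
          simp [hR1def, Matrix.mul_apply, Matrix.vecHead, Matrix.vecTail, Matrix.transpose_apply, Fin.sum_univ_three, Matrix.one_apply] <;>
          field_simp <;> nlinarith [hρ2]
      have hdet1 : R1.det = 1 := by
        simp [hR1def, Matrix.det_fin_three]
        field_simp
        nlinarith [hρ2]
      have horth2 : R2ᵀ * R2 = 1 := by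
        ext i j; fin_cases i <;> fin_cases j <;>
          simp [hR2def, Matrix.mul_apply, Matrix.vecHead, Matrix.vecTail, Matrix.transpose_apply, Fin.sum_univ_three, Matrix.one_apply] <;>
          field_simp <;> nlinarith [hρ2, hr2]
      have hdet2 : R2.det = 1 := by
        simp [hR2def, Matrix.det_fin_three]
        field_simp
        nlinarith [hρ2, hr2]
      have hmv1 : R1.mulVec k = ![ρ, 0, k 2] := by
        funext i; fin_cases i <;>
          simp [hR1def, Matrix.mulVec, dotProduct, Matrix.vecHead, Matrix.vecTail, Fin.sum_univ_three] <;>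
          field_simp <;> nlinarith [hρ2]
      have hmv2 : R2.mulVec ![ρ, 0, k 2] = ![r, 0, 0] := by
        funext i; fin_cases i <;>
          simp [hR2def, Matrix.mulVec, dotProduct, Matrix.vecHead, Matrix.vecTail, Fin.sum_univ_three] <;>
          field_simp <;> nlinarith [hρ2, hr2]
      have e1 := h R1 horth1 hdet1 k
      have e2 := h R2 horth2 hdet2 ![ρ, 0, k 2]
      rw [hmv1] at e1
      rw [hmv2] at e2
      exact ⟨r, hr2, by rw [← e1, ← e2]⟩
  · rintro ⟨u, hu⟩ R hR hdet k
    have key : ∀ i j : Fin 3, R 0 i * R 0 j + R 1 i * R 1 j + R 2 i * R 2 j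
        = if i = j then 1 else 0 := by
      intro i j
      have := congrFun (congrFun hR i) j
      simpa [Matrix.mul_apply, Fin.sum_univ_three, Matrix.one_apply] using this
    have h00 := key 0 0; have h11 := key 1 1; have h22 := key 2 2
    have h01 := key 0 1; have h02 := key 0 2; have h12 := key 1 2
    simp only [if_true, if_pos rfl] at h00 h11 h22
    rw [if_neg (by decide)] at h01 h02 h12
    rw [hu, hu]
    congr 1
    simp only [Matrix.mulVec, dotProduct, Matrix.vecHead, Matrix.vecTail, Fin.sum_univ_three]
    linear_combination (k 0)^2 * h00 + (k 1)^2 * h11 + (k 2)^2 * h22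
      + 2*(k 0)*(k 1)*h01 + 2*(k 0)*(k 2)*h02 + 2*(k 1)*(k 2)*h12
end

section
/- There exists a unique pair of sequences (α_ℓ)_{ℓ≥1} of N×N matrices over R and (β_m)_{m≥0} of (q−N)×N matrices over R with β₀ = E satisfying the two formal power series identities X(t) = 𝔸(t) + 𝔅(t)·𝔹(t) and 𝔹(t)·X(t) = ℂ(t) + 𝔻(t)·𝔹(t) (the consistency identities expressing that the nonconserved moments of the lattice Boltzmann scheme expand as Y = 𝔹(Δt)·W and that the conserved moments W satisfy the equivalent partial differential equations ∂_t W = Σ_{ℓ≥1} Δt^{ℓ−1} α_ℓ W). Moreover, these sequences are given by the recursion: for every k ≥ 0, α_{k+1} = A_{k+1} + Σ_{j=1}^{k+1} B_j β_{k+1−j} − Σ_{j=2}^{k+1} (1/j!) Γ^j_{k+1}, and β_{k+1} = S⁻¹ · ( C_{k+1} + Σ_{j=1}^{k+1} D_j β_{k+1−j} − Σ_{j=1}^{k+1} (1/j!) K^j_{k+1} ). -/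
/-- `seriesPow a j p` is the coefficient of `t^p` in `F(t)^j`,
where `F(t) = Σ_{ℓ≥0} t^ℓ a_ℓ` (in the application `a 0 = 0`, so that
`F(t) = Σ_{ℓ≥1} t^ℓ a_ℓ`). -/
def seriesPow {A : Type*} [Ring A] (a : ℕ → A) : ℕ → ℕ → A
  | 0, p => if p = 0 then 1 else 0
  | j + 1, p => ∑ ij ∈ Finset.HasAntidiagonal.antidiagonal p, a ij.1 * seriesPow a j ij.2

/-- `Xcoef α p` is the coefficient of `t^p` in `X(t) = Σ_{j≥0} (1/j!) F(t)^j`,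
where `F(t) = Σ_{ℓ≥1} t^ℓ α_ℓ` (encoded by `α 0 = 0`, so that the coefficient of
`t^p` in `F(t)^j` vanishes for `j > p`). -/
def Xcoef {n : Type*} [Fintype n] [DecidableEq n] {R : Type*} [CommRing R] [Algebra ℚ R]
    (α : ℕ → Matrix n n R) (p : ℕ) : Matrix n n R :=
  ∑ j ∈ Finset.range (p + 1), ((j.factorial : ℚ)⁻¹) • seriesPow α j p

/-- `Kcoef β α j p` is the coefficient of `t^p` in `𝔹(t)·F(t)^j`, where
`𝔹(t) = Σ_{m≥0} t^m β_m` and `F(t) = Σ_{ℓ≥1} t^ℓ α_ℓ` (encoded by `α 0 = 0`). -/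
def Kcoef {m n : Type*} [Fintype n] [DecidableEq n] {R : Type*} [CommRing R]
    (β : ℕ → Matrix m n R) (α : ℕ → Matrix n n R) (j p : ℕ) : Matrix m n R :=
  ∑ ij ∈ Finset.HasAntidiagonal.antidiagonal p, β ij.1 * seriesPow α j ij.2



section SP
variable {A : Type*} [Ring A]

lemma sp_succ (a : ℕ → A) (j p : ℕ) :
    seriesPow a (j+1) p = ∑ ij ∈ Finset.HasAntidiagonal.antidiagonal p, a ij.1 * seriesPow a j ij.2 := rfl

lemma sp_one (a : ℕ → A) (p : ℕ) : seriesPow a 1 p = a p := by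
  rw [sp_succ, Finset.sum_eq_single (p, 0)]
  · simp [seriesPow]
  · rintro ⟨i, j⟩ hmem hne
    rw [Finset.HasAntidiagonal.mem_antidiagonal] at hmem
    have hj : j ≠ 0 := by rintro rfl; exact hne (by simp [← hmem])
    simp [seriesPow, hj]
  · intro h; exact absurd (by simp [Finset.mem_antidiagonal]) h

lemma sp_at_zero (a : ℕ → A) (ha : a 0 = 0) {j : ℕ} (hj : 1 ≤ j) : seriesPow a j 0 = 0 := by
  obtain ⟨j', rfl⟩ : ∃ j', j = j' + 1 := ⟨j - 1, by omega⟩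
  rw [sp_succ]
  simp [ha]

lemma sp_eq_zero_of_lt (a : ℕ → A) (ha : a 0 = 0) : ∀ j p, p < j → seriesPow a j p = 0
  | 0, p, h => absurd h (Nat.not_lt_zero p)
  | j+1, p, h => by
    rw [sp_succ]
    apply Finset.sum_eq_zero
    rintro ⟨i, m⟩ hmem
    rw [Finset.HasAntidiagonal.mem_antidiagonal] at hmem
    rcases Nat.eq_zero_or_pos i with rfl | hi
    · simp [ha]
    · rw [sp_eq_zero_of_lt a ha j m (by omega), mul_zero]

lemma sp_congr_le (a b : ℕ → A) : ∀ (j p : ℕ), (∀ i ≤ p, a i = b i) →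
    seriesPow a j p = seriesPow b j p
  | 0, _, _ => rfl
  | j+1, p, h => by
    rw [sp_succ, sp_succ]
    apply Finset.sum_congr rfl
    rintro ⟨i, m⟩ hmem
    rw [Finset.HasAntidiagonal.mem_antidiagonal] at hmem
    rw [h i (by omega), sp_congr_le a b j m (fun i' hi' => h i' (by omega))]

lemma sp_congr_lt (a b : ℕ → A) (ha : a 0 = 0) (hb : b 0 = 0) {p : ℕ}
    (h : ∀ i < p, a i = b i) {j : ℕ} (hj : 2 ≤ j) :
    seriesPow a j p = seriesPow b j p := by
  obtain ⟨j', rfl⟩ : ∃ j'', j = j'' + 1 := ⟨j - 1, by omega⟩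
  have hj1 : 1 ≤ j' := by omega
  rw [sp_succ, sp_succ]
  apply Finset.sum_congr rfl
  rintro ⟨i, m⟩ hmem
  rw [Finset.HasAntidiagonal.mem_antidiagonal] at hmem
  rcases Nat.eq_zero_or_pos i with rfl | hi
  · rw [ha, hb, zero_mul, zero_mul]
  rcases Nat.eq_zero_or_pos m with rfl | hm
  · rw [sp_at_zero a ha hj1, sp_at_zero b hb hj1, mul_zero, mul_zero]
  · rw [h i (by omega), sp_congr_le a b j' m (fun i' hi' => h i' (by omega))]

end SP

section Split
variable {M : Type*} [AddCommMonoid M]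

lemma range_split1 (f : ℕ → M) (k : ℕ) :
    ∑ l ∈ Finset.range (k+2), f l = f 0 + ∑ j ∈ Finset.Icc 1 (k+1), f j := by
  rw [Finset.sum_range_succ' f (k+1), ← Finset.Ico_add_one_right_eq_Icc, Finset.sum_Ico_eq_sum_range, add_comm]
  congr 1
  exact Finset.sum_congr rfl fun i _ => by rw [add_comm]

lemma range_split2 (f : ℕ → M) (k : ℕ) :
    ∑ l ∈ Finset.range (k+2), f l = f 0 + (f 1 + ∑ j ∈ Finset.Icc 2 (k+1), f j) := by
  rw [range_split1]
  congr 1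

lemma antidiag_split (f : ℕ → ℕ → M) (k : ℕ) :
    ∑ ij ∈ Finset.HasAntidiagonal.antidiagonal (k+1), f ij.1 ij.2
      = f 0 (k+1) + ∑ j ∈ Finset.Icc 1 (k+1), f j (k+1-j) := by
  rw [Finset.Nat.sum_antidiagonal_eq_sum_range_succ_mk]
  exact range_split1 (fun j => f j (k+1-j)) k

lemma rearrange {G : Type*} [AddCommGroup G] (x s K Cc Dd : G) :
    x + K = Cc + (x - s + Dd) ↔ s = Cc + Dd - K := by
  constructor <;> intro h
  · calc s = (x + K) - (x - s + K) := by abel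
      _ = (Cc + (x - s + Dd)) - (x - s + K) := by rw [h]
      _ = Cc + Dd - K := by abel
  · rw [h]; abel

end Split

section Mat
variable {κ ι : Type*} [Fintype ι] [DecidableEq ι] [Fintype κ] [DecidableEq κ]
  {R : Type*} [CommRing R] [Algebra ℚ R]

lemma Xcoef_zero (α : ℕ → Matrix ι ι R) : Xcoef α 0 = 1 := by
  simp [Xcoef, seriesPow]

lemma Xcoef_succ (α : ℕ → Matrix ι ι R) (hα : α 0 = 0) (k : ℕ) :
    Xcoef α (k+1) = α (k+1)
      + ∑ j ∈ Finset.Icc 2 (k+1), ((j.factorial : ℚ)⁻¹) • seriesPow α j (k+1) := by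
  unfold Xcoef
  rw [show k+1+1 = k+2 from rfl,
    range_split2 (fun j => ((j.factorial : ℚ)⁻¹) • seriesPow α j (k+1)) k]
  have h0 : seriesPow α 0 (k+1) = 0 := by simp [seriesPow]
  rw [h0, smul_zero, sp_one, zero_add]
  norm_num

lemma Kcoef_zero (β : ℕ → Matrix κ ι R) (α : ℕ → Matrix ι ι R) (p : ℕ) :
    Kcoef β α 0 p = β p := by
  unfold Kcoef
  rw [Finset.sum_eq_single (p, 0)]
  · simp [seriesPow]
  · rintro ⟨i, j⟩ hmem hne
    rw [Finset.HasAntidiagonal.mem_antidiagonal] at hmem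
    have hj : j ≠ 0 := by rintro rfl; exact hne (by simp [← hmem])
    simp [seriesPow, hj]
  · intro h; exact absurd (by simp [Finset.mem_antidiagonal]) h

lemma Kcoef_congr (β β' : ℕ → Matrix κ ι R) (α α' : ℕ → Matrix ι ι R)
    (hα : α 0 = 0) (hα' : α' 0 = 0) {p : ℕ}
    (hae : ∀ i ≤ p, α i = α' i) (hbe : ∀ i < p, β i = β' i) {j : ℕ} (hj : 1 ≤ j) :
    Kcoef β α j p = Kcoef β' α' j p := by
  unfold Kcoef
  apply Finset.sum_congr rfl
  rintro ⟨i, m⟩ hmem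
  rw [Finset.HasAntidiagonal.mem_antidiagonal] at hmem
  rcases Nat.eq_zero_or_pos m with rfl | hm
  · rw [sp_at_zero α hα hj, sp_at_zero α' hα' hj, Matrix.mul_zero, Matrix.mul_zero]
  · rw [hbe i (by omega), sp_congr_le α α' j m (fun i' hi' => hae i' (by omega))]

lemma interchange (β : ℕ → Matrix κ ι R) (α : ℕ → Matrix ι ι R) (hα : α 0 = 0) (p : ℕ) :
    ∑ ij ∈ Finset.HasAntidiagonal.antidiagonal p, β ij.1 * Xcoef α ij.2
      = ∑ l ∈ Finset.range (p+1), ((l.factorial : ℚ)⁻¹) • Kcoef β α l p := by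
  have step : ∀ ij ∈ Finset.HasAntidiagonal.antidiagonal p, β ij.1 * Xcoef α ij.2
      = ∑ l ∈ Finset.range (p+1), ((l.factorial : ℚ)⁻¹) • (β ij.1 * seriesPow α l ij.2) := by
    rintro ⟨i, m⟩ hmem
    rw [Finset.HasAntidiagonal.mem_antidiagonal] at hmem
    unfold Xcoef
    rw [Matrix.mul_sum]
    rw [Finset.sum_subset (Finset.range_subset_range.2 (by omega : m+1 ≤ p+1))]
    · exact Finset.sum_congr rfl fun l _ => by rw [Matrix.mul_smul]
    · intro l _ hl
      rw [Finset.mem_range, not_lt] at hl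
      rw [sp_eq_zero_of_lt α hα l m (by omega), smul_zero, Matrix.mul_zero]
  rw [Finset.sum_congr rfl step, Finset.sum_comm]
  exact Finset.sum_congr rfl fun l _ => by rw [Kcoef, Finset.smul_sum]

/-- The equation of order `k+1` in the first consistency identity is equivalent to the
recursion formula for `α (k+1)`. -/
lemma eq1_iff (A : ℕ → Matrix ι ι R) (B : ℕ → Matrix ι κ R)
    (α : ℕ → Matrix ι ι R) (β : ℕ → Matrix κ ι R) (hα0 : α 0 = 0) (hB0 : B 0 = 0) (k : ℕ) :
    (Xcoef α (k+1) = A (k+1) + ∑ ij ∈ Finset.HasAntidiagonal.antidiagonal (k+1), B ij.1 * β ij.2)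
    ↔ α (k+1) = A (k+1) + (∑ j ∈ Finset.Icc 1 (k+1), B j * β (k+1-j))
        - ∑ j ∈ Finset.Icc 2 (k+1), ((j.factorial : ℚ)⁻¹) • seriesPow α j (k+1) := by
  rw [Xcoef_succ α hα0 k, antidiag_split (fun i j => B i * β j) k, hB0, Matrix.zero_mul,
    zero_add, eq_sub_iff_add_eq]

/-- The equation of order `k+1` in the second consistency identity is equivalent to the
recursion formula for `S * β (k+1)`. -/
lemma eq2_iff (C : ℕ → Matrix κ ι R) (D : ℕ → Matrix κ κ R) (S : Matrix κ κ R)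
    (α : ℕ → Matrix ι ι R) (β : ℕ → Matrix κ ι R) (hα0 : α 0 = 0) (hD0 : D 0 = 1 - S) (k : ℕ) :
    (∑ ij ∈ Finset.HasAntidiagonal.antidiagonal (k+1), β ij.1 * Xcoef α ij.2
        = C (k+1) + ∑ ij ∈ Finset.HasAntidiagonal.antidiagonal (k+1), D ij.1 * β ij.2)
    ↔ S * β (k+1) = C (k+1) + (∑ j ∈ Finset.Icc 1 (k+1), D j * β (k+1-j))
        - ∑ j ∈ Finset.Icc 1 (k+1), ((j.factorial : ℚ)⁻¹) • Kcoef β α j (k+1) := by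
  rw [interchange β α hα0 (k+1), show (k+1)+1 = k+2 from rfl,
    range_split1 (fun l => ((l.factorial : ℚ)⁻¹) • Kcoef β α l (k+1)) k,
    antidiag_split (fun i j => D i * β j) k, hD0, Kcoef_zero]
  have hsub : (1 - S) * β (k+1) = β (k+1) - S * β (k+1) := by
    rw [Matrix.sub_mul, Matrix.one_mul]
  rw [hsub]
  norm_num
  exact rearrange (β (k+1)) (S * β (k+1)) _ _ _

end Mat

section Rec
variable {κ ι : Type*} [Fintype ι] [DecidableEq ι] [Fintype κ] [DecidableEq κ]
  {R : Type*} [CommRing R] [Algebra ℚ R]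

/-- Any solution of the consistency identities satisfies the recursion formulas. -/
lemma solution_rec (A : ℕ → Matrix ι ι R) (B : ℕ → Matrix ι κ R)
    (C : ℕ → Matrix κ ι R) (D : ℕ → Matrix κ κ R) (S : Matrix κ κ R)
    (hB0 : B 0 = 0) (hD0 : D 0 = 1 - S) (hSinv : S⁻¹ * S = 1)
    (α : ℕ → Matrix ι ι R) (β : ℕ → Matrix κ ι R) (hα0 : α 0 = 0)
    (h1 : ∀ p : ℕ, Xcoef α p = A p + ∑ ij ∈ Finset.HasAntidiagonal.antidiagonal p, B ij.1 * β ij.2)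
    (h2 : ∀ p : ℕ, ∑ ij ∈ Finset.HasAntidiagonal.antidiagonal p, β ij.1 * Xcoef α ij.2
        = C p + ∑ ij ∈ Finset.HasAntidiagonal.antidiagonal p, D ij.1 * β ij.2) (k : ℕ) :
    α (k + 1) = A (k + 1) + (∑ j ∈ Finset.Icc 1 (k + 1), B j * β (k + 1 - j))
        - ∑ j ∈ Finset.Icc 2 (k + 1), ((j.factorial : ℚ)⁻¹) • seriesPow α j (k + 1)
    ∧ β (k + 1) = S⁻¹ * (C (k + 1) + (∑ j ∈ Finset.Icc 1 (k + 1), D j * β (k + 1 - j))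
        - ∑ j ∈ Finset.Icc 1 (k + 1), ((j.factorial : ℚ)⁻¹) • Kcoef β α j (k + 1)) := by
  refine ⟨(eq1_iff A B α β hα0 hB0 k).1 (h1 (k+1)), ?_⟩
  have key := (eq2_iff C D S α β hα0 hD0 k).1 (h2 (k+1))
  rw [← key, ← Matrix.mul_assoc, hSinv, Matrix.one_mul]

/-- The first formula of the recursion defining the Taylor expansion coefficients. -/
noncomputable def nextAlpha (A : ℕ → Matrix ι ι R) (B : ℕ → Matrix ι κ R)
    (a : ℕ → Matrix ι ι R) (b : ℕ → Matrix κ ι R) (k : ℕ) : Matrix ι ι R :=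
  A (k+1) + (∑ j ∈ Finset.Icc 1 (k+1), B j * b (k+1-j))
    - ∑ j ∈ Finset.Icc 2 (k+1), ((j.factorial : ℚ)⁻¹) • seriesPow a j (k+1)

/-- The second formula of the recursion defining the Taylor expansion coefficients. -/
noncomputable def nextBeta (C : ℕ → Matrix κ ι R) (D : ℕ → Matrix κ κ R) (S : Matrix κ κ R)
    (a : ℕ → Matrix ι ι R) (b : ℕ → Matrix κ ι R) (k : ℕ) : Matrix κ ι R :=
  S⁻¹ * (C (k+1) + (∑ j ∈ Finset.Icc 1 (k+1), D j * b (k+1-j))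
    - ∑ j ∈ Finset.Icc 1 (k+1), ((j.factorial : ℚ)⁻¹) • Kcoef b a j (k+1))

/-- Iterative construction of (truncations of) the Taylor expansion coefficients. -/
noncomputable def build (A : ℕ → Matrix ι ι R) (B : ℕ → Matrix ι κ R)
    (C : ℕ → Matrix κ ι R) (D : ℕ → Matrix κ κ R)
    (E : Matrix κ ι R) (S : Matrix κ κ R) :
    ℕ → ((ℕ → Matrix ι ι R) × (ℕ → Matrix κ ι R))
  | 0 => (fun _ => 0, fun n => if n = 0 then E else 0)
  | k+1 =>
    (Function.update (build A B C D E S k).1 (k+1)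
        (nextAlpha A B (build A B C D E S k).1 (build A B C D E S k).2 k),
     Function.update (build A B C D E S k).2 (k+1)
       (nextBeta C D S
         (Function.update (build A B C D E S k).1 (k+1)
           (nextAlpha A B (build A B C D E S k).1 (build A B C D E S k).2 k))
         (build A B C D E S k).2 k))

end Rec

/-- there is a unique pair of sequences `(α_ℓ)_{ℓ≥1}` (encoded by
`α : ℕ → _` with `α 0 = 0`) and `(β_m)_{m≥0}` with `β₀ = E` satisfying the
consistency identities `X(t) = 𝔸(t) + 𝔅(t)𝔹(t)` and `𝔹(t)X(t) = ℂ(t) + 𝔻(t)𝔹(t)`;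
moreover these sequences obey the recursion
`α_{k+1} = A_{k+1} + Σ_{j=1}^{k+1} B_j β_{k+1−j} − Σ_{j=2}^{k+1} (1/j!) Γ^j_{k+1}` and
`β_{k+1} = S⁻¹ (C_{k+1} + Σ_{j=1}^{k+1} D_j β_{k+1−j} − Σ_{j=1}^{k+1} (1/j!) K^j_{k+1})`. -/
theorem taylor_expansion_exists_unique (N q : ℕ) (hN : 1 ≤ N) (hq : N < q)
    (R : Type*) [CommRing R] [Algebra ℚ R]
    (A : ℕ → Matrix (Fin N) (Fin N) R) (B : ℕ → Matrix (Fin N) (Fin (q - N)) R)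
    (C : ℕ → Matrix (Fin (q - N)) (Fin N) R) (D : ℕ → Matrix (Fin (q - N)) (Fin (q - N)) R)
    (E : Matrix (Fin (q - N)) (Fin N) R) (S : Matrix (Fin (q - N)) (Fin (q - N)) R)
    (hSdiag : S.IsDiag) (hSunit : ∀ i, IsUnit (S i i))
    (hA0 : A 0 = 1) (hB0 : B 0 = 0) (hC0 : C 0 = S * E) (hD0 : D 0 = 1 - S) :
    (∃! ab : (ℕ → Matrix (Fin N) (Fin N) R) × (ℕ → Matrix (Fin (q - N)) (Fin N) R),
      ab.1 0 = 0 ∧ ab.2 0 = E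
      ∧ (∀ p : ℕ, Xcoef ab.1 p = A p + ∑ ij ∈ Finset.HasAntidiagonal.antidiagonal p, B ij.1 * ab.2 ij.2)
      ∧ (∀ p : ℕ, ∑ ij ∈ Finset.HasAntidiagonal.antidiagonal p, ab.2 ij.1 * Xcoef ab.1 ij.2
          = C p + ∑ ij ∈ Finset.HasAntidiagonal.antidiagonal p, D ij.1 * ab.2 ij.2))
    ∧ (∀ (α : ℕ → Matrix (Fin N) (Fin N) R) (β : ℕ → Matrix (Fin (q - N)) (Fin N) R),
        α 0 = 0 → β 0 = E →
        (∀ p : ℕ, Xcoef α p = A p + ∑ ij ∈ Finset.HasAntidiagonal.antidiagonal p, B ij.1 * β ij.2) →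
        (∀ p : ℕ, ∑ ij ∈ Finset.HasAntidiagonal.antidiagonal p, β ij.1 * Xcoef α ij.2
            = C p + ∑ ij ∈ Finset.HasAntidiagonal.antidiagonal p, D ij.1 * β ij.2) →
        ∀ k : ℕ,
          α (k + 1) = A (k + 1) + (∑ j ∈ Finset.Icc 1 (k + 1), B j * β (k + 1 - j))
              - ∑ j ∈ Finset.Icc 2 (k + 1), ((j.factorial : ℚ)⁻¹) • seriesPow α j (k + 1)
          ∧ β (k + 1) = S⁻¹ * (C (k + 1) + (∑ j ∈ Finset.Icc 1 (k + 1), D j * β (k + 1 - j))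
              - ∑ j ∈ Finset.Icc 1 (k + 1), ((j.factorial : ℚ)⁻¹) • Kcoef β α j (k + 1))) := by
  -- invertibility of S
  have hdet : IsUnit S.det := by
    rw [← Matrix.IsDiag.diagonal_diag hSdiag, Matrix.det_diagonal]
    choose u hu using hSunit
    have hc : ∀ i ∈ Finset.univ, S.diag i = (u i : R) := fun i _ => (hu i).symm
    rw [Finset.prod_congr rfl hc, ← Units.coe_prod]
    exact Units.isUnit _
  have hSinv : S⁻¹ * S = 1 := Matrix.nonsing_inv_mul S hdet
  have hSinv' : S * S⁻¹ = 1 := Matrix.mul_nonsing_inv S hdet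
  -- the constructed solution
  set α : ℕ → Matrix (Fin N) (Fin N) R := fun n => (build A B C D E S n).1 n with hαdef
  set β : ℕ → Matrix (Fin (q - N)) (Fin N) R := fun n => (build A B C D E S n).2 n with hβdef
  have hα0 : α 0 = 0 := rfl
  have hβ0 : β 0 = E := by show (if 0 = 0 then E else 0) = E; simp
  -- agreement of truncations
  have hag : ∀ m n, n ≤ m →
      (build A B C D E S m).1 n = α n ∧ (build A B C D E S m).2 n = β n := by
    intro m
    induction m with
    | zero =>
      intro n hn
      obtain rfl : n = 0 := by omega
      exact ⟨rfl, rfl⟩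
    | succ k ih =>
      intro n hn
      rcases eq_or_lt_of_le hn with rfl | hlt
      · exact ⟨rfl, rfl⟩
      · have hne : n ≠ k + 1 := by omega
        have h1 : (build A B C D E S (k+1)).1 = Function.update (build A B C D E S k).1 (k+1)
            (nextAlpha A B (build A B C D E S k).1 (build A B C D E S k).2 k) := rfl
        have h2 : (build A B C D E S (k+1)).2 = Function.update (build A B C D E S k).2 (k+1)
            (nextBeta C D S (build A B C D E S (k+1)).1 (build A B C D E S k).2 k) := rfl
        rw [h1, h2, Function.update_of_ne hne, Function.update_of_ne hne]
        exact ih n (by omega)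
  -- the recursion formulas for the constructed solution
  have hrecα : ∀ k : ℕ, α (k + 1) = A (k + 1)
      + (∑ j ∈ Finset.Icc 1 (k + 1), B j * β (k + 1 - j))
      - ∑ j ∈ Finset.Icc 2 (k + 1), ((j.factorial : ℚ)⁻¹) • seriesPow α j (k + 1) := by
    intro k
    have ha : α (k+1) = nextAlpha A B (build A B C D E S k).1 (build A B C D E S k).2 k := by
      show (build A B C D E S (k+1)).1 (k+1) = _
      have h1 : (build A B C D E S (k+1)).1 = Function.update (build A B C D E S k).1 (k+1)
          (nextAlpha A B (build A B C D E S k).1 (build A B C D E S k).2 k) := rfl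
      rw [h1, Function.update_self]
    have e1 : ∑ j ∈ Finset.Icc 1 (k+1), B j * (build A B C D E S k).2 (k+1-j)
        = ∑ j ∈ Finset.Icc 1 (k+1), B j * β (k+1-j) :=
      Finset.sum_congr rfl fun j hj => by
        rw [Finset.mem_Icc] at hj
        rw [(hag k (k+1-j) (by omega)).2]
    have e2 : ∑ j ∈ Finset.Icc 2 (k+1),
          ((j.factorial : ℚ)⁻¹) • seriesPow (build A B C D E S k).1 j (k+1)
        = ∑ j ∈ Finset.Icc 2 (k+1), ((j.factorial : ℚ)⁻¹) • seriesPow α j (k+1) :=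
      Finset.sum_congr rfl fun j hj => by
        rw [Finset.mem_Icc] at hj
        rw [sp_congr_lt (build A B C D E S k).1 α ((hag k 0 (by omega)).1.trans hα0) hα0
          (fun i hi => (hag k i (by omega)).1) (by omega)]
    rw [ha]
    unfold nextAlpha
    rw [e1, e2]
  have hrecβ : ∀ k : ℕ, β (k + 1) = S⁻¹ * (C (k + 1)
      + (∑ j ∈ Finset.Icc 1 (k + 1), D j * β (k + 1 - j))
      - ∑ j ∈ Finset.Icc 1 (k + 1), ((j.factorial : ℚ)⁻¹) • Kcoef β α j (k + 1)) := by
    intro k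
    have hb : β (k+1)
        = nextBeta C D S (build A B C D E S (k+1)).1 (build A B C D E S k).2 k := by
      show (build A B C D E S (k+1)).2 (k+1) = _
      have h2 : (build A B C D E S (k+1)).2 = Function.update (build A B C D E S k).2 (k+1)
          (nextBeta C D S (build A B C D E S (k+1)).1 (build A B C D E S k).2 k) := rfl
      rw [h2, Function.update_self]
    have e3 : ∑ j ∈ Finset.Icc 1 (k+1), D j * (build A B C D E S k).2 (k+1-j)
        = ∑ j ∈ Finset.Icc 1 (k+1), D j * β (k+1-j) :=
      Finset.sum_congr rfl fun j hj => by
        rw [Finset.mem_Icc] at hj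
        rw [(hag k (k+1-j) (by omega)).2]
    have e4 : ∑ j ∈ Finset.Icc 1 (k+1),
          ((j.factorial : ℚ)⁻¹) • Kcoef (build A B C D E S k).2 (build A B C D E S (k+1)).1 j (k+1)
        = ∑ j ∈ Finset.Icc 1 (k+1), ((j.factorial : ℚ)⁻¹) • Kcoef β α j (k+1) :=
      Finset.sum_congr rfl fun j hj => by
        rw [Finset.mem_Icc] at hj
        rw [Kcoef_congr (build A B C D E S k).2 β (build A B C D E S (k+1)).1 α
          ((hag (k+1) 0 (by omega)).1.trans hα0) hα0
          (fun i hi => (hag (k+1) i hi).1) (fun i hi => (hag k i (by omega)).2) (by omega)]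
    rw [hb]
    unfold nextBeta
    rw [e3, e4]
  -- the constructed pair is a solution
  have h1 : ∀ p : ℕ, Xcoef α p = A p + ∑ ij ∈ Finset.HasAntidiagonal.antidiagonal p, B ij.1 * β ij.2 := by
    intro p
    cases p with
    | zero => rw [Xcoef_zero]; simp [hA0, hB0]
    | succ k => exact (eq1_iff A B α β hα0 hB0 k).2 (hrecα k)
  have h2 : ∀ p : ℕ, ∑ ij ∈ Finset.HasAntidiagonal.antidiagonal p, β ij.1 * Xcoef α ij.2
      = C p + ∑ ij ∈ Finset.HasAntidiagonal.antidiagonal p, D ij.1 * β ij.2 := by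
    intro p
    cases p with
    | zero =>
      simp only [Finset.Nat.antidiagonal_zero, Finset.sum_singleton]
      rw [Xcoef_zero, Matrix.mul_one, hβ0, hC0, hD0, Matrix.sub_mul, Matrix.one_mul]
      abel
    | succ k =>
      apply (eq2_iff C D S α β hα0 hD0 k).2
      rw [hrecβ k, ← Matrix.mul_assoc, hSinv', Matrix.one_mul]
  constructor
  · refine ⟨(α, β), ⟨hα0, hβ0, h1, h2⟩, ?_⟩
    rintro ⟨α', β'⟩ ⟨hα0', hβ0', h1', h2'⟩
    have hrec' := solution_rec A B C D S hB0 hD0 hSinv α' β' hα0' h1' h2'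
    have key : ∀ n : ℕ, α' n = α n ∧ β' n = β n := by
      intro n
      induction n using Nat.strong_induction_on with
      | _ n ih =>
        match n, ih with
        | 0, _ => exact ⟨hα0'.trans hα0.symm, hβ0'.trans hβ0.symm⟩
        | (k+1), ih =>
          obtain ⟨ha', hb'⟩ := hrec' k
          have hαeq : α' (k+1) = α (k+1) := by
            rw [ha', hrecα k]
            have e1 : ∑ j ∈ Finset.Icc 1 (k+1), B j * β' (k+1-j)
                = ∑ j ∈ Finset.Icc 1 (k+1), B j * β (k+1-j) :=
              Finset.sum_congr rfl fun j hj => by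
                rw [Finset.mem_Icc] at hj
                rw [(ih (k+1-j) (by omega)).2]
            have e2 : ∑ j ∈ Finset.Icc 2 (k+1), ((j.factorial : ℚ)⁻¹) • seriesPow α' j (k+1)
                = ∑ j ∈ Finset.Icc 2 (k+1), ((j.factorial : ℚ)⁻¹) • seriesPow α j (k+1) :=
              Finset.sum_congr rfl fun j hj => by
                rw [Finset.mem_Icc] at hj
                rw [sp_congr_lt α' α hα0' hα0 (fun i hi => (ih i hi).1) (by omega)]
            rw [e1, e2]
          have hβeq : β' (k+1) = β (k+1) := by
            rw [hb', hrecβ k]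
            have e3 : ∑ j ∈ Finset.Icc 1 (k+1), D j * β' (k+1-j)
                = ∑ j ∈ Finset.Icc 1 (k+1), D j * β (k+1-j) :=
              Finset.sum_congr rfl fun j hj => by
                rw [Finset.mem_Icc] at hj
                rw [(ih (k+1-j) (by omega)).2]
            have e4 : ∑ j ∈ Finset.Icc 1 (k+1), ((j.factorial : ℚ)⁻¹) • Kcoef β' α' j (k+1)
                = ∑ j ∈ Finset.Icc 1 (k+1), ((j.factorial : ℚ)⁻¹) • Kcoef β α j (k+1) :=
              Finset.sum_congr rfl fun j hj => by
                rw [Finset.mem_Icc] at hj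
                have hae : ∀ i ≤ k+1, α' i = α i := by
                  intro i hi
                  rcases eq_or_lt_of_le hi with rfl | hi'
                  · exact hαeq
                  · exact (ih i hi').1
                rw [Kcoef_congr β' β α' α hα0' hα0 hae (fun i hi => (ih i hi).2) (by omega)]
            rw [e3, e4]
          exact ⟨hαeq, hβeq⟩
    exact Prod.ext (funext fun n => (key n).1) (funext fun n => (key n).2)
  · intro α' β' hα0' hβ0' h1' h2' k
    exact solution_rec A B C D S hB0 hD0 hSinv α' β' hα0' h1' h2' k
end

section
/- If the sequences (α_ℓ)_{ℓ≥1} and (β_m)_{m≥0} with β₀ = E satisfy the consistency identities X(t) = 𝔸(t) + 𝔅(t)·𝔹(t) and 𝔹(t)·X(t) = ℂ(t) + 𝔻(t)·𝔹(t), then α₁ = A₁ + B₁·E and β₁ = S⁻¹·( C₁ + D₁·E − E·α₁ ). -/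
lemma Xcoef_zero_s9 {n : Type*} [Fintype n] [DecidableEq n] {R : Type*} [CommRing R] [Algebra ℚ R]
    (α : ℕ → Matrix n n R) : Xcoef α 0 = 1 := by
  simp [Xcoef, seriesPow]

lemma Xcoef_one {n : Type*} [Fintype n] [DecidableEq n] {R : Type*} [CommRing R] [Algebra ℚ R]
    (α : ℕ → Matrix n n R) : Xcoef α 1 = α 1 := by
  simp [Xcoef, seriesPow, Finset.sum_range_succ, Finset.Nat.antidiagonal_succ]

/-- if `(α_ℓ)_{ℓ≥1}`, `(β_m)_{m≥0}` with `β₀ = E` satisfy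
`X(t) = 𝔸(t) + 𝔅(t)𝔹(t)` and `𝔹(t)X(t) = ℂ(t) + 𝔻(t)𝔹(t)`, then
`α₁ = A₁ + B₁E` and `β₁ = S⁻¹(C₁ + D₁E − Eα₁)`. -/
theorem taylor_expansion_first_order (N q : ℕ) (hN : 1 ≤ N) (hq : N < q)
    (R : Type*) [CommRing R] [Algebra ℚ R]
    (A : ℕ → Matrix (Fin N) (Fin N) R) (B : ℕ → Matrix (Fin N) (Fin (q - N)) R)
    (C : ℕ → Matrix (Fin (q - N)) (Fin N) R) (D : ℕ → Matrix (Fin (q - N)) (Fin (q - N)) R)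
    (E : Matrix (Fin (q - N)) (Fin N) R) (S : Matrix (Fin (q - N)) (Fin (q - N)) R)
    (hSdiag : S.IsDiag) (hSunit : ∀ i, IsUnit (S i i))
    (hA0 : A 0 = 1) (hB0 : B 0 = 0) (hC0 : C 0 = S * E) (hD0 : D 0 = 1 - S)
    (α : ℕ → Matrix (Fin N) (Fin N) R) (β : ℕ → Matrix (Fin (q - N)) (Fin N) R)
    (hα0 : α 0 = 0) (hβ0 : β 0 = E)
    (hid1 : ∀ p : ℕ, Xcoef α p = A p + ∑ ij ∈ Finset.HasAntidiagonal.antidiagonal p, B ij.1 * β ij.2)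
    (hid2 : ∀ p : ℕ, ∑ ij ∈ Finset.HasAntidiagonal.antidiagonal p, β ij.1 * Xcoef α ij.2
        = C p + ∑ ij ∈ Finset.HasAntidiagonal.antidiagonal p, D ij.1 * β ij.2) :
    α 1 = A 1 + B 1 * E ∧ β 1 = S⁻¹ * (C 1 + D 1 * E - E * α 1) := by
  have hSinv : S⁻¹ * S = 1 := by
    apply Matrix.nonsing_inv_mul
    have hS : S = Matrix.diagonal S.diag := (Matrix.IsDiag.diagonal_diag hSdiag).symm
    rw [hS, Matrix.det_diagonal]
    exact Finset.prod_induction _ IsUnit (fun a b => IsUnit.mul) isUnit_one (fun i _ => hSunit i)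
  have h1 := hid1 1
  rw [Xcoef_one] at h1
  simp [Finset.Nat.antidiagonal_succ, hB0, hβ0] at h1
  refine ⟨h1, ?_⟩
  have h2 := hid2 1
  simp [Finset.Nat.sum_antidiagonal_eq_sum_range_succ_mk, Finset.sum_range_succ, Xcoef_one, Xcoef_zero_s9, hβ0, hD0] at h2
  have hS1 : S * β 1 = C 1 + D 1 * E - E * α 1 := by
    have h3 := h2
    rw [Matrix.sub_mul, Matrix.one_mul] at h3
    linear_combination (norm := abel) h3
  calc β 1 = S⁻¹ * (S * β 1) := by rw [← Matrix.mul_assoc, hSinv, Matrix.one_mul]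
    _ = S⁻¹ * (C 1 + D 1 * E - E * α 1) := by rw [hS1]
end

section
/- If the sequences (α_ℓ)_{ℓ≥1} and (β_m)_{m≥0} with β₀ = E satisfy the consistency identities X(t) = 𝔸(t) + 𝔅(t)·𝔹(t) and 𝔹(t)·X(t) = ℂ(t) + 𝔻(t)·𝔹(t), then α₂ = A₂ + B₂·E + B₁·β₁ − (1/2)·α₁², and β₂ = S⁻¹·( C₂ + D₂·E + D₁·β₁ − E·α₂ − β₁·α₁ − (1/2)·E·α₁² ). -/
/-- if `(α_ℓ)_{ℓ≥1}`, `(β_m)_{m≥0}` with `β₀ = E` satisfy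
`X(t) = 𝔸(t) + 𝔅(t)𝔹(t)` and `𝔹(t)X(t) = ℂ(t) + 𝔻(t)𝔹(t)`, then
`α₂ = A₂ + B₂E + B₁β₁ − (1/2)α₁²` and
`β₂ = S⁻¹(C₂ + D₂E + D₁β₁ − Eα₂ − β₁α₁ − (1/2)Eα₁²)`. -/
theorem taylor_expansion_second_order (N q : ℕ) (hN : 1 ≤ N) (hq : N < q)
    (R : Type*) [CommRing R] [Algebra ℚ R]
    (A : ℕ → Matrix (Fin N) (Fin N) R) (B : ℕ → Matrix (Fin N) (Fin (q - N)) R)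
    (C : ℕ → Matrix (Fin (q - N)) (Fin N) R) (D : ℕ → Matrix (Fin (q - N)) (Fin (q - N)) R)
    (E : Matrix (Fin (q - N)) (Fin N) R) (S : Matrix (Fin (q - N)) (Fin (q - N)) R)
    (hSdiag : S.IsDiag) (hSunit : ∀ i, IsUnit (S i i))
    (hA0 : A 0 = 1) (hB0 : B 0 = 0) (hC0 : C 0 = S * E) (hD0 : D 0 = 1 - S)
    (α : ℕ → Matrix (Fin N) (Fin N) R) (β : ℕ → Matrix (Fin (q - N)) (Fin N) R)
    (hα0 : α 0 = 0) (hβ0 : β 0 = E)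
    (hid1 : ∀ p : ℕ, Xcoef α p = A p + ∑ ij ∈ Finset.HasAntidiagonal.antidiagonal p, B ij.1 * β ij.2)
    (hid2 : ∀ p : ℕ, ∑ ij ∈ Finset.HasAntidiagonal.antidiagonal p, β ij.1 * Xcoef α ij.2
        = C p + ∑ ij ∈ Finset.HasAntidiagonal.antidiagonal p, D ij.1 * β ij.2) :
    α 2 = A 2 + B 2 * E + B 1 * β 1 - ((2 : ℚ)⁻¹) • (α 1 * α 1)
    ∧ β 2 = S⁻¹ * (C 2 + D 2 * E + D 1 * β 1 - E * α 2 - β 1 * α 1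
        - ((2 : ℚ)⁻¹) • (E * (α 1 * α 1))) := by
  have hX0 : Xcoef α 0 = 1 := by
    simp [Xcoef, seriesPow]
  have hX1 : Xcoef α 1 = α 1 := by
    simp [Xcoef, seriesPow, Finset.Nat.sum_antidiagonal_eq_sum_range_succ_mk,
      Finset.sum_range_succ, hα0, Nat.factorial]
  have hX2 : Xcoef α 2 = α 2 + ((2:ℚ)⁻¹) • (α 1 * α 1) := by
    simp [Xcoef, seriesPow, Finset.Nat.sum_antidiagonal_eq_sum_range_succ_mk,
      Finset.sum_range_succ, hα0, Nat.factorial]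
  have h1 := hid1 2
  rw [hX2, Finset.Nat.sum_antidiagonal_eq_sum_range_succ_mk] at h1
  simp [Finset.sum_range_succ, hB0, hβ0] at h1
  have goal1 : α 2 = A 2 + B 2 * E + B 1 * β 1 - ((2 : ℚ)⁻¹) • (α 1 * α 1) := by
    rw [eq_sub_iff_add_eq, h1]; abel
  refine ⟨goal1, ?_⟩
  -- second identity
  have h2 := hid2 2
  rw [Finset.Nat.sum_antidiagonal_eq_sum_range_succ_mk,
      Finset.Nat.sum_antidiagonal_eq_sum_range_succ_mk] at h2
  simp [Finset.sum_range_succ, hX0, hX1, hX2, hβ0, hD0] at h2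
  -- h2 : E * (α 2 + ((2:ℚ)⁻¹) • (α 1 * α 1)) + β 1 * α 1 + β 2
  --    = C 2 + ((1 - S) * β 2 + D 1 * β 1) + D 2 * E  (up to arrangement; inspect)
  have hSβ : S * β 2 = C 2 + D 2 * E + D 1 * β 1 - E * α 2 - β 1 * α 1
      - ((2 : ℚ)⁻¹) • (E * (α 1 * α 1)) := by
    rw [Matrix.mul_add, Matrix.mul_smul, Matrix.sub_mul, Matrix.one_mul] at h2
    have h3 := sub_eq_zero.mpr h2
    rw [← sub_eq_zero, ← h3]
    abel
  -- S invertible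
  have hSdet : IsUnit S.det := by
    rw [← (Matrix.isDiag_iff_diagonal_diag S).mp hSdiag, Matrix.det_diagonal]
    exact Finset.prod_induction _ IsUnit (fun _ _ => IsUnit.mul) isUnit_one
      (fun i _ => hSunit i)
  rw [← hSβ, ← Matrix.mul_assoc, Matrix.nonsing_inv_mul S hSdet, Matrix.one_mul]
end
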